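/- arXiv:1510.01844 — 6 statements merged into one kernel-verified Lean document; each statement's English description precedes it below -/
import Mathlib

section
/- (KL divergence refined lower bound.) Let P be a pmf on 𝒳 with P(x)>0 for all x, and let R be a pmf on 𝒳 with R ≠ P. Let J(x)=R(x)−P(x). Then D(R||P) / ( χ²(R||P) · ‖J‖₁ ) ≥ φ( max_{A⊆𝒳} min{P(A), 1−P(A)} ) / ( 4 · max_{x∈𝒳} |J(x)/P(x)| ), where ‖J‖₁ = Σ_x |J(x)| and P(A)=Σ_{x∈A}P(x). -/
open Real Set

set_option maxHeartbeats 1000000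


/-- A probability mass function on a finite set. -/
def IsPmf {𝒳 : Type*} [Fintype 𝒳] (P : 𝒳 → ℝ) : Prop :=
  (∀ x, 0 ≤ P x) ∧ ∑ x, P x = 1

/-- KL divergence `D(R‖P) = ∑ₓ R(x) log(R(x)/P(x))`. -/
noncomputable def klDiv {𝒳 : Type*} [Fintype 𝒳] (R P : 𝒳 → ℝ) : ℝ :=
  ∑ x, R x * Real.log (R x / P x)

/-- χ²-divergence `χ²(R‖P) = ∑ₓ (R(x) − P(x))²/P(x)`. -/
noncomputable def chiSq {𝒳 : Type*} [Fintype 𝒳] (R P : 𝒳 → ℝ) : ℝ :=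
  ∑ x, (R x - P x) ^ 2 / P x

/-- The function `φ(p) = (1/(1−2p)) log((1−p)/p)` for `p ∈ [0,1/2)`, with `φ(1/2) = 2`. -/
noncomputable def phiFun (p : ℝ) : ℝ :=
  if p = 1 / 2 then 2 else (1 / (1 - 2 * p)) * Real.log ((1 - p) / p)

/-- `max_{A ⊆ 𝒳} min{P(A), 1 − P(A)}` where `P(A) = ∑_{x∈A} P(x)`. -/
noncomputable def balSep {𝒳 : Type*} [Fintype 𝒳] (P : 𝒳 → ℝ) : ℝ :=
  (Finset.univ : Finset 𝒳).powerset.sup' (Finset.powerset_nonempty _)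
    (fun A => min (∑ x ∈ A, P x) (1 - ∑ x ∈ A, P x))



lemma aux_mono {f f' : ℝ → ℝ} {u v : ℝ}
    (hd : ∀ x ∈ Set.Icc u v, HasDerivAt f (f' x) x)
    (hs : ∀ x ∈ Set.Icc u v, 0 ≤ f' x) : MonotoneOn f (Set.Icc u v) := by
  refine monotoneOn_of_deriv_nonneg (convex_Icc u v)
    (fun x hx => (hd x hx).continuousAt.continuousWithinAt)
    (fun x hx => ((hd x (interior_subset hx)).differentiableAt).differentiableWithinAt)
    (fun x hx => ?_)
  rw [(hd x (interior_subset hx)).deriv]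
  exact hs x (interior_subset hx)

lemma aux_anti {f f' : ℝ → ℝ} {u v : ℝ}
    (hd : ∀ x ∈ Set.Icc u v, HasDerivAt f (f' x) x)
    (hs : ∀ x ∈ Set.Icc u v, f' x ≤ 0) : AntitoneOn f (Set.Icc u v) := by
  refine antitoneOn_of_deriv_nonpos (convex_Icc u v)
    (fun x hx => (hd x hx).continuousAt.continuousWithinAt)
    (fun x hx => ((hd x (interior_subset hx)).differentiableAt).differentiableWithinAt)
    (fun x hx => ?_)
  rw [(hd x (interior_subset hx)).deriv]
  exact hs x (interior_subset hx)

/-- I1: `2 log((1-x)/x) ≤ 1/x - 1/(1-x)` on `(0,1/2]`. -/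
lemma ineq_I1 {x : ℝ} (h0 : 0 < x) (h2 : x ≤ 1/2) :
    2*(Real.log (1-x) - Real.log x) ≤ 1/x - 1/(1-x) := by
  have h1 : x < 1 := by linarith
  set h : ℝ → ℝ := fun y => 1/y - 1/(1-y) - 2*Real.log (1-y) + 2*Real.log y with hh
  have hanti : AntitoneOn h (Set.Icc x (1/2)) := by
    refine aux_anti (f' := fun y => -((1-2*y)^2) / (y^2*(1-y)^2)) ?_ ?_
    · intro y hy
      obtain ⟨hy0, hy2⟩ := hy
      have hy0' : 0 < y := lt_of_lt_of_le h0 hy0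
      have hy1 : (0:ℝ) < 1 - y := by linarith
      have d1 : HasDerivAt (fun y : ℝ => 1/y) (-(y^2)⁻¹) y := by
        simpa [one_div] using (hasDerivAt_inv hy0'.ne')
      have hin : HasDerivAt (fun y : ℝ => 1 - y) (-1) y := by
        simpa using (hasDerivAt_id y).const_sub 1
      have d2 : HasDerivAt (fun y : ℝ => 1/(1-y)) (-((1-y)^2)⁻¹ * (-1)) y := by
        simpa [one_div, Function.comp_def] using (hasDerivAt_inv hy1.ne').comp y hin
      have d3 : HasDerivAt (fun y : ℝ => Real.log (1-y)) ((1-y)⁻¹ * (-1)) y :=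
        (Real.hasDerivAt_log hy1.ne').comp y hin
      have d4 : HasDerivAt Real.log y⁻¹ y := Real.hasDerivAt_log hy0'.ne'
      have := ((d1.sub d2).sub (d3.const_mul 2)).add (d4.const_mul 2)
      refine this.congr_deriv ?_
      field_simp
      ring
    · intro y hy
      obtain ⟨hy0, hy2⟩ := hy
      have hy0' : 0 < y := lt_of_lt_of_le h0 hy0
      have hy1 : (0:ℝ) < 1 - y := by linarith
      apply div_nonpos_of_nonpos_of_nonneg
      · nlinarith [sq_nonneg (1-2*y)]
      · positivity
  have hkey : h (1/2) ≤ h x :=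
    hanti (left_mem_Icc.2 h2) (right_mem_Icc.2 h2) h2
  have hval : h (1/2) = 0 := by norm_num [hh]
  have := hval ▸ hkey
  simp only [hh] at this
  linarith

/-- I2: `log((1-x)/x) ≥ 2(1-2x)` on `(0,1/2]`. -/
lemma ineq_I2 {x : ℝ} (h0 : 0 < x) (h2 : x ≤ 1/2) :
    2*(1-2*x) ≤ Real.log (1-x) - Real.log x := by
  have h1 : x < 1 := by linarith
  set h : ℝ → ℝ := fun y => Real.log (1-y) - Real.log y - 2*(1-2*y) with hh
  have hanti : AntitoneOn h (Set.Icc x (1/2)) := by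
    refine aux_anti (f' := fun y => -((1-2*y)^2) / (y*(1-y))) ?_ ?_
    · intro y hy
      obtain ⟨hy0, hy2⟩ := hy
      have hy0' : 0 < y := lt_of_lt_of_le h0 hy0
      have hy1 : (0:ℝ) < 1 - y := by linarith
      have hin : HasDerivAt (fun y : ℝ => 1 - y) (-1) y := by
        simpa using (hasDerivAt_id y).const_sub 1
      have d3 : HasDerivAt (fun y : ℝ => Real.log (1-y)) ((1-y)⁻¹ * (-1)) y :=
        (Real.hasDerivAt_log hy1.ne').comp y hin
      have d4 : HasDerivAt Real.log y⁻¹ y := Real.hasDerivAt_log hy0'.ne'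
      have d5 : HasDerivAt (fun y : ℝ => 2*(1-2*y)) (-4) y := by
        have : HasDerivAt (fun y : ℝ => 1 - 2*y) (-2) y := by
          simpa using ((hasDerivAt_id y).const_mul 2).const_sub 1
        rw [show (-4:ℝ) = 2 * -2 by norm_num]
        exact this.const_mul 2
      have := (d3.sub d4).sub d5
      refine this.congr_deriv ?_
      field_simp
      ring
    · intro y hy
      obtain ⟨hy0, hy2⟩ := hy
      have hy0' : 0 < y := lt_of_lt_of_le h0 hy0
      have hy1 : (0:ℝ) < 1 - y := by linarith
      apply div_nonpos_of_nonpos_of_nonneg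
      · nlinarith [sq_nonneg (1-2*y)]
      · positivity
  have hkey : h (1/2) ≤ h x :=
    hanti (left_mem_Icc.2 h2) (right_mem_Icc.2 h2) h2
  have hval : h (1/2) = 0 := by norm_num [hh]
  have := hval ▸ hkey
  simp only [hh] at this
  linarith



lemma phiFun_of_lt {q : ℝ} (h0 : 0 < q) (h2 : q < 1/2) :
    phiFun q = (Real.log (1-q) - Real.log q) / (1-2*q) := by
  rw [phiFun, if_neg h2.ne, Real.log_div (by linarith) h0.ne']
  ring

lemma two_le_phiFun {q : ℝ} (h0 : 0 < q) (h2 : q ≤ 1/2) : 2 ≤ phiFun q := by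
  rcases eq_or_lt_of_le h2 with h | h
  · rw [phiFun, if_pos h]
  · rw [phiFun_of_lt h0 h]
    rw [le_div_iff₀ (by linarith)]
    have := ineq_I2 h0 h2
    linarith

lemma phiFun_mul {q : ℝ} (h0 : 0 < q) (h2 : q ≤ 1/2) :
    phiFun q * (1-2*q) = Real.log (1-q) - Real.log q := by
  rcases eq_or_lt_of_le h2 with h | h
  · rw [phiFun, if_pos h]
    subst h; norm_num
  · rw [phiFun_of_lt h0 h, div_mul_cancel₀]
    linarith

lemma phiFun_bound {q : ℝ} (h0 : 0 < q) (h2 : q ≤ 1/2) :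
    2 * phiFun q * (q*(1-q)) ≤ 1 := by
  rcases eq_or_lt_of_le h2 with h | h
  · rw [phiFun, if_pos h]
    subst h; norm_num
  · have h1 : (0:ℝ) < 1 - q := by linarith
    have hd : (0:ℝ) < 1 - 2*q := by linarith
    have hI : 2*(Real.log (1-q) - Real.log q) ≤ 1/q - 1/(1-q) := ineq_I1 h0 h2
    have e : (1/q - 1/(1-q))*(q*(1-q)) = 1-2*q := by field_simp; ring
    have h' : 2*(Real.log (1-q) - Real.log q)*(q*(1-q)) ≤ 1-2*q := by
      nlinarith [mul_le_mul_of_nonneg_right hI (by positivity : (0:ℝ) ≤ q*(1-q))]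
    rw [phiFun_of_lt h0 h]
    rw [show 2 * ((Real.log (1-q) - Real.log q)/(1-2*q)) * (q*(1-q))
        = (2*(Real.log (1-q) - Real.log q)*(q*(1-q)))/(1-2*q) by ring]
    rw [div_le_one hd]
    exact h'

lemma phiFun_anti {t s : ℝ} (ht : 0 < t) (hts : t ≤ s) (hs : s ≤ 1/2) :
    phiFun s ≤ phiFun t := by
  rcases eq_or_lt_of_le hs with h | h
  · rw [h, phiFun, if_pos rfl]
    exact two_le_phiFun ht (hts.trans hs)
  · set F : ℝ → ℝ := fun x => (Real.log (1-x) - Real.log x) / (1-2*x) with hF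
    have hFanti : AntitoneOn F (Set.Icc t s) := by
      refine aux_anti (f' := fun x =>
        (((1-x)⁻¹*(-1) - x⁻¹)*(1-2*x) - (Real.log (1-x) - Real.log x)*(-2))/(1-2*x)^2) ?_ ?_
      · intro x hx
        obtain ⟨hx0, hx2⟩ := hx
        have hx0' : 0 < x := lt_of_lt_of_le ht hx0
        have hx1 : (0:ℝ) < 1 - x := by nlinarith
        have hxd : (1:ℝ) - 2*x ≠ 0 := by nlinarith
        have hin : HasDerivAt (fun y : ℝ => 1 - y) (-1) x := by
          simpa using (hasDerivAt_id x).const_sub 1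
        have d3 : HasDerivAt (fun y : ℝ => Real.log (1-y)) ((1-x)⁻¹ * (-1)) x :=
          (Real.hasDerivAt_log hx1.ne').comp x hin
        have d4 : HasDerivAt Real.log x⁻¹ x := Real.hasDerivAt_log hx0'.ne'
        have dden : HasDerivAt (fun y : ℝ => 1 - 2*y) (-2) x := by
          simpa using ((hasDerivAt_id x).const_mul 2).const_sub 1
        exact (d3.sub d4).div dden hxd
      · intro x hx
        obtain ⟨hx0, hx2⟩ := hx
        have hx0' : 0 < x := lt_of_lt_of_le ht hx0
        have hx2' : x < 1/2 := lt_of_le_of_lt hx2 h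
        have hx1 : (0:ℝ) < 1 - x := by linarith
        apply div_nonpos_of_nonpos_of_nonneg _ (sq_nonneg _)
        have hI := ineq_I1 hx0' hx2'.le
        have e : ((1-x)⁻¹*(-1) - x⁻¹)*(1-2*x) = -(1/x - 1/(1-x)) := by
          field_simp
          ring
        linarith [hI, e]
    have h1 : phiFun t = F t := phiFun_of_lt ht (lt_of_le_of_lt hts h)
    have h2 : phiFun s = F s := phiFun_of_lt (lt_of_lt_of_le ht hts) h
    rw [h1, h2]
    exact hFanti (left_mem_Icc.2 hts) (right_mem_Icc.2 hts) hts

lemma phiFun_min {b : ℝ} (h0 : 0 < b) (h1 : b < 1) :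
    phiFun (min b (1-b)) = phiFun b := by
  rcases le_or_gt b (1/2) with h | h
  · rw [min_eq_left (by linarith)]
  · rw [min_eq_right (by linarith)]
    have hb : b ≠ 1/2 := by linarith
    have hb' : (1:ℝ) - b ≠ 1/2 := by intro e; apply hb; linarith
    rw [phiFun, phiFun, if_neg hb', if_neg hb]
    rw [show (1:ℝ)-(1-b) = b by ring]
    have hlog : Real.log (b/(1-b)) = -Real.log ((1-b)/b) := by
      rw [← Real.log_inv]
      congr 1
      field_simp
    rw [hlog, show (1:ℝ)-2*(1-b) = -(1-2*b) by ring]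
    have h2b : (1:ℝ) - 2*b ≠ 0 := by intro e; apply hb; linarith
    field_simp




lemma binary_core {q p : ℝ} (hq0 : 0 < q) (hq2 : q ≤ 1/2) (hp0 : 0 ≤ p) (hp1 : p ≤ 1) :
    phiFun q * (p - q)^2 ≤
      p * (Real.log p - Real.log q) + (1-p) * (Real.log (1-p) - Real.log (1-q)) := by
  have hq1 : q < 1 := by linarith
  set c : ℝ := phiFun q with hcdef
  have hc2 : 2 ≤ c := two_le_phiFun hq0 hq2
  have hc0 : 0 < c := by linarith
  have hc1 : c * (1-2*q) = Real.log (1-q) - Real.log q := phiFun_mul hq0 hq2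
  have hc3 : 2 * c * (q*(1-q)) ≤ 1 := phiFun_bound hq0 hq2
  set g : ℝ → ℝ := fun y => y * Real.log y + (1-y) * Real.log (1-y)
      - y * Real.log q - (1-y) * Real.log (1-q) - c * (y-q)^2 with hgdef
  set g1 : ℝ → ℝ := fun y => Real.log y - Real.log (1-y)
      - Real.log q + Real.log (1-q) - 2*c*(y-q) with hg1def
  set g2 : ℝ → ℝ := fun y => 1/y + 1/(1-y) - 2*c with hg2def
  have hg' : ∀ x ∈ Set.Ioo (0:ℝ) 1, HasDerivAt g (g1 x) x := by
    intro x hx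
    obtain ⟨hx0, hx1⟩ := hx
    have h1x : (0:ℝ) < 1 - x := by linarith
    have hin : HasDerivAt (fun y : ℝ => 1 - y) (-1) x := by
      simpa using (hasDerivAt_id x).const_sub 1
    have t1 : HasDerivAt (fun y : ℝ => y * Real.log y) (Real.log x + 1) x :=
      Real.hasDerivAt_mul_log hx0.ne'
    have t2 : HasDerivAt (fun y : ℝ => (1-y) * Real.log (1-y))
        ((Real.log (1-x) + 1) * (-1)) x :=
      (Real.hasDerivAt_mul_log h1x.ne').comp x hin
    have t3 : HasDerivAt (fun y : ℝ => y * Real.log q) (Real.log q) x := by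
      simpa using (hasDerivAt_id x).mul_const (Real.log q)
    have t4 : HasDerivAt (fun y : ℝ => (1-y) * Real.log (1-q))
        ((-1) * Real.log (1-q)) x := hin.mul_const (Real.log (1-q))
    have t5 : HasDerivAt (fun y : ℝ => c * (y-q)^2) (c * (2*(x-q)^1*1)) x :=
      (((hasDerivAt_id x).sub_const q).pow 2).const_mul c
    have h := (((t1.add t2).sub t3).sub t4).sub t5
    refine h.congr_deriv ?_
    simp only [hg1def]
    ring
  have hg1' : ∀ x ∈ Set.Ioo (0:ℝ) 1, HasDerivAt g1 (g2 x) x := by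
    intro x hx
    obtain ⟨hx0, hx1⟩ := hx
    have h1x : (0:ℝ) < 1 - x := by linarith
    have hin : HasDerivAt (fun y : ℝ => 1 - y) (-1) x := by
      simpa using (hasDerivAt_id x).const_sub 1
    have t1 : HasDerivAt Real.log x⁻¹ x := Real.hasDerivAt_log hx0.ne'
    have t2 : HasDerivAt (fun y : ℝ => Real.log (1-y)) ((1-x)⁻¹ * (-1)) x :=
      (Real.hasDerivAt_log h1x.ne').comp x hin
    have t5 : HasDerivAt (fun y : ℝ => 2*c*(y-q)) (2*c) x := by
      simpa using ((hasDerivAt_id x).sub_const q).const_mul (2*c)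
    have h := (((t1.sub t2).sub (hasDerivAt_const x (Real.log q))).add
      (hasDerivAt_const x (Real.log (1-q)))).sub t5
    refine h.congr_deriv ?_
    simp only [hg2def]
    field_simp
    ring
  have hgq : g q = 0 := by simp only [hgdef]; ring
  have hg1q : g1 q = 0 := by simp only [hg1def]; ring
  have hgq' : g (1-q) = 0 := by
    simp only [hgdef, show (1:ℝ)-(1-q) = q by ring]
    linear_combination (-(1-2*q)) * hc1
  have hg1q' : g1 (1-q) = 0 := by
    simp only [hg1def, show (1:ℝ)-(1-q) = q by ring]
    linear_combination (-2) * hc1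
  have gmono : ∀ u v : ℝ, 0 < u → v < 1 → (∀ x ∈ Set.Icc u v, 0 ≤ g1 x) →
      MonotoneOn g (Set.Icc u v) := fun u v hu hv hs =>
    aux_mono (fun x hx => hg' x ⟨lt_of_lt_of_le hu hx.1, lt_of_le_of_lt hx.2 hv⟩) hs
  have ganti : ∀ u v : ℝ, 0 < u → v < 1 → (∀ x ∈ Set.Icc u v, g1 x ≤ 0) →
      AntitoneOn g (Set.Icc u v) := fun u v hu hv hs =>
    aux_anti (fun x hx => hg' x ⟨lt_of_lt_of_le hu hx.1, lt_of_le_of_lt hx.2 hv⟩) hs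
  have g1mono : ∀ u v : ℝ, 0 < u → v < 1 → (∀ x ∈ Set.Icc u v, 0 ≤ g2 x) →
      MonotoneOn g1 (Set.Icc u v) := fun u v hu hv hs =>
    aux_mono (fun x hx => hg1' x ⟨lt_of_lt_of_le hu hx.1, lt_of_le_of_lt hx.2 hv⟩) hs
  have g1anti : ∀ u v : ℝ, 0 < u → v < 1 → (∀ x ∈ Set.Icc u v, g2 x ≤ 0) →
      AntitoneOn g1 (Set.Icc u v) := fun u v hu hv hs =>
    aux_anti (fun x hx => hg1' x ⟨lt_of_lt_of_le hu hx.1, lt_of_le_of_lt hx.2 hv⟩) hs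
  have hg2pos : ∀ x : ℝ, 0 < x → x < 1 → 2*c*(x*(1-x)) ≤ 1 → 0 ≤ g2 x := by
    intro x hx0 hx1 hle
    have h1x : (0:ℝ) < 1 - x := by linarith
    have e : (1/x + 1/(1-x)) * (x*(1-x)) = 1 := by field_simp; ring
    simp only [hg2def]
    nlinarith [mul_pos hx0 h1x, e]
  have hg2neg : ∀ x : ℝ, 0 < x → x < 1 → 1 ≤ 2*c*(x*(1-x)) → g2 x ≤ 0 := by
    intro x hx0 hx1 hle
    have h1x : (0:ℝ) < 1 - x := by linarith
    have e : (1/x + 1/(1-x)) * (x*(1-x)) = 1 := by field_simp; ring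
    simp only [hg2def]
    nlinarith [mul_pos hx0 h1x, e]
  have sqle : ∀ a b : ℝ, a ≤ b → b ≤ 1/2 → a*(1-a) ≤ b*(1-b) := by
    intro a b hab hb
    nlinarith [mul_nonneg (sub_nonneg.2 hab) (show (0:ℝ) ≤ 1-b-a by linarith)]
  set r : ℝ := Real.sqrt (1 - 2/c) with hrdef
  have hrarg : (0:ℝ) ≤ 1 - 2/c := by
    rw [sub_nonneg, div_le_one hc0]; exact hc2
  have hr2 : r^2 = 1 - 2/c := Real.sq_sqrt hrarg
  have hr0 : 0 ≤ r := Real.sqrt_nonneg _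
  have hr1 : r < 1 := by nlinarith [hr2, hr0, div_pos (by norm_num : (0:ℝ) < 2) hc0]
  set p1 : ℝ := (1-r)/2 with hp1def
  have hp1pos : 0 < p1 := by simp only [hp1def]; linarith
  have hp1le : p1 ≤ 1/2 := by simp only [hp1def]; linarith
  have hprod : 2*c*(p1*(1-p1)) = 1 := by
    have e1 : p1*(1-p1) = (1-r^2)/4 := by simp only [hp1def]; ring
    rw [e1, hr2]
    field_simp
    ring
  have hqle' : q*(1-q) ≤ p1*(1-p1) := by nlinarith [hc3, hprod]
  have hqp1 : q ≤ p1 := by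
    by_contra hlt
    push_neg at hlt
    have h2 : (p1 - q) * (1 - p1 - q) ≥ 0 := by nlinarith [hqle']
    have h3 : 1 - p1 - q ≤ 0 := by nlinarith [h2]
    have hq' : q = 1/2 := by linarith
    have hp' : p1 = 1/2 := by linarith
    rw [hq', hp'] at hlt; linarith
  -- piece 2 : 0 ≤ g z for z ∈ [q, p1]
  have piece2 : ∀ z : ℝ, q ≤ z → z ≤ p1 → 0 ≤ g z := by
    intro z hz1 hz2
    have hz1' : z < 1 := by linarith
    have hmon : MonotoneOn g1 (Set.Icc q z) := by
      refine g1mono q z hq0 hz1' ?_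
      intro x hx
      have hxle : x*(1-x) ≤ p1*(1-p1) := sqle x p1 (hx.2.trans hz2) hp1le
      exact hg2pos x (lt_of_lt_of_le hq0 hx.1) (by linarith [hx.2]) (by nlinarith [hprod])
    have hsg1 : ∀ x ∈ Set.Icc q z, 0 ≤ g1 x := by
      intro x hx
      have := hmon (left_mem_Icc.2 hz1) hx hx.1
      rw [hg1q] at this
      exact this
    have := (gmono q z hq0 hz1' hsg1) (left_mem_Icc.2 hz1) (right_mem_Icc.2 hz1) hz1
    rw [hgq] at this
    exact this
  -- piece 3 : 0 ≤ g z for z ∈ [1-p1, 1-q]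
  have piece3 : ∀ z : ℝ, 1-p1 ≤ z → z ≤ 1-q → 0 ≤ g z := by
    intro z hz1 hz2
    have hz0 : 0 < z := by linarith
    have hmon : MonotoneOn g1 (Set.Icc z (1-q)) := by
      refine g1mono z (1-q) hz0 (by linarith) ?_
      intro x hx
      have hx1 : x < 1 := by nlinarith [hx.2]
      have hxle : (1-x)*(1-(1-x)) ≤ p1*(1-p1) :=
        sqle (1-x) p1 (by linarith [hx.1]) hp1le
      refine hg2pos x (by linarith [hx.1]) hx1 (by nlinarith [hprod])
    have hsg1 : ∀ x ∈ Set.Icc z (1-q), g1 x ≤ 0 := by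
      intro x hx
      have := hmon hx (right_mem_Icc.2 hz2) hx.2
      rw [hg1q'] at this
      exact this
    have := (ganti z (1-q) hz0 (by linarith) hsg1)
      (left_mem_Icc.2 hz2) (right_mem_Icc.2 hz2) hz2
    rw [hgq'] at this
    exact this
  -- main claim on the open interval
  have claim : ∀ y ∈ Set.Ioo (0:ℝ) 1, 0 ≤ g y := by
    intro y hy
    obtain ⟨hy0, hy1⟩ := hy
    rcases le_or_gt y q with hc1' | hc1'
    · -- piece 1 : y ≤ q
      have hmon : MonotoneOn g1 (Set.Icc y q) := by
        refine g1mono y q hy0 hq1 ?_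
        intro x hx
        have hxle : x*(1-x) ≤ q*(1-q) := sqle x q hx.2 hq2
        exact hg2pos x (lt_of_lt_of_le hy0 hx.1) (by linarith [hx.2]) (by nlinarith [hc3])
      have hsg1 : ∀ x ∈ Set.Icc y q, g1 x ≤ 0 := by
        intro x hx
        have := hmon hx (right_mem_Icc.2 hc1') hx.2
        rw [hg1q] at this
        exact this
      have := (ganti y q hy0 hq1 hsg1) (left_mem_Icc.2 hc1') (right_mem_Icc.2 hc1') hc1'
      rw [hgq] at this
      exact this
    rcases le_or_gt y p1 with hc2' | hc2'
    · exact piece2 y hc1'.le hc2'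
    rcases le_or_gt (1-q) y with hc4' | hc4'
    · -- piece 4 : 1-q ≤ y
      have hmon : MonotoneOn g1 (Set.Icc (1-q) y) := by
        refine g1mono (1-q) y (by linarith) hy1 ?_
        intro x hx
        have hx1 : x < 1 := lt_of_le_of_lt hx.2 hy1
        have hxle : (1-x)*(1-(1-x)) ≤ q*(1-q) := sqle (1-x) q (by linarith [hx.1]) hq2
        exact hg2pos x (by linarith [hq1, hx.1]) hx1 (by nlinarith [hc3])
      have hsg1 : ∀ x ∈ Set.Icc (1-q) y, 0 ≤ g1 x := by
        intro x hx
        have := hmon (left_mem_Icc.2 hc4') hx hx.1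
        rw [hg1q'] at this
        exact this
      have := (gmono (1-q) y (by linarith) hy1 hsg1)
        (left_mem_Icc.2 hc4') (right_mem_Icc.2 hc4') hc4'
      rw [hgq'] at this
      exact this
    · -- middle : p1 < y < 1-q ; subcase on position vs 1-p1
      rcases le_or_gt (1-p1) y with hc3' | hc3'
      · exact piece3 y hc3' hc4'.le
      -- truly middle : p1 ≤ y ≤ 1-p1
      have hanti1 : AntitoneOn g1 (Set.Icc p1 (1-p1)) := by
        refine g1anti p1 (1-p1) hp1pos (by linarith) ?_
        intro x hx
        have hx0 : 0 < x := lt_of_lt_of_le hp1pos hx.1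
        have hx1 : x < 1 := by nlinarith [hx.2]
        refine hg2neg x hx0 hx1 ?_
        have : p1*(1-p1) ≤ x*(1-x) := by
          nlinarith [mul_nonneg (sub_nonneg.2 hx.1) (sub_nonneg.2 hx.2)]
        nlinarith [hprod]
      have hymem : y ∈ Set.Icc p1 (1-p1) := ⟨hc2'.le, hc3'.le⟩
      rcases le_or_gt 0 (g1 y) with hsy | hsy
      · -- g1 y ≥ 0 : g monotone on [p1, y]
        have hsg1 : ∀ x ∈ Set.Icc p1 y, 0 ≤ g1 x := by
          intro x hx
          have hxm : x ∈ Set.Icc p1 (1-p1) := ⟨hx.1, hx.2.trans hc3'.le⟩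
          exact le_trans hsy (hanti1 hxm hymem hx.2)
        have := (gmono p1 y hp1pos hy1 hsg1)
          (left_mem_Icc.2 hc2'.le) (right_mem_Icc.2 hc2'.le) hc2'.le
        exact le_trans (piece2 p1 hqp1 le_rfl) this
      · -- g1 y ≤ 0 : g antitone on [y, 1-p1]
        have hsg1 : ∀ x ∈ Set.Icc y (1-p1), g1 x ≤ 0 := by
          intro x hx
          have hxm : x ∈ Set.Icc p1 (1-p1) := ⟨hc2'.le.trans hx.1, hx.2⟩
          exact le_trans (hanti1 hymem hxm hx.1) hsy.le
        have := (ganti y (1-p1) hy0 (by linarith) hsg1)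
          (left_mem_Icc.2 hc3'.le) (right_mem_Icc.2 hc3'.le) hc3'.le
        exact le_trans (piece3 (1-p1) le_rfl (by linarith)) this
  -- extend to the closed interval by continuity
  have hcont : Continuous g := by
    have c1 : Continuous fun y : ℝ => y * Real.log y := Real.continuous_mul_log
    have c2 : Continuous fun y : ℝ => (1-y) * Real.log (1-y) := by
      have h1 : Continuous fun y : ℝ => 1 - y :=
        continuous_const.sub (continuous_id' : Continuous fun y : ℝ => y)
      exact Real.continuous_mul_log.comp h1
    rw [hgdef]
    exact (((c1.add c2).sub ((continuous_id' : Continuous fun y : ℝ => y).mul continuous_const)).sub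
      ((continuous_const.sub (continuous_id' : Continuous fun y : ℝ => y)).mul continuous_const)).sub
      (continuous_const.mul (((continuous_id' : Continuous fun y : ℝ => y).sub continuous_const).pow 2))
  have hclosed : 0 ≤ g p := by
    have hsub : Set.Icc (0:ℝ) 1 ⊆ closure (Set.Ioo (0:ℝ) 1) := by
      rw [closure_Ioo (by norm_num : (0:ℝ) ≠ 1)]
    have hset : closure (Set.Ioo (0:ℝ) 1) ⊆ {z : ℝ | 0 ≤ g z} :=
      closure_minimal (fun z hz => claim z hz) (isClosed_le continuous_const hcont)
    exact hset (hsub ⟨hp0, hp1⟩)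
  simp only [hgdef] at hclosed
  nlinarith [hclosed]

lemma binary_bound {q p : ℝ} (hq0 : 0 < q) (hq1 : q < 1) (hp0 : 0 ≤ p) (hp1 : p ≤ 1) :
    phiFun (min q (1-q)) * (p - q)^2 ≤
      p * (Real.log p - Real.log q) + (1-p) * (Real.log (1-p) - Real.log (1-q)) := by
  rcases le_or_gt q (1/2) with h | h
  · rw [min_eq_left (by linarith)]
    exact binary_core hq0 h hp0 hp1
  · rw [min_eq_right (by linarith)]
    have key := binary_core (q := 1-q) (p := 1-p)
      (by linarith) (by linarith) (by linarith) (by linarith)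
    rw [show (1:ℝ)-(1-p) = p by ring, show (1:ℝ)-(1-q) = q by ring] at key
    have e : ((1:ℝ)-p-(1-q))^2 = (p-q)^2 := by ring
    rw [e] at key
    linarith


/-- log-sum inequality -/
lemma log_sum {𝒳 : Type*} [Fintype 𝒳] (S : Finset 𝒳) (R P : 𝒳 → ℝ)
    (hP : ∀ x ∈ S, 0 < P x) (hR : ∀ x ∈ S, 0 ≤ R x) :
    (∑ x ∈ S, R x) * Real.log ((∑ x ∈ S, R x) / (∑ x ∈ S, P x)) ≤
      ∑ x ∈ S, R x * Real.log (R x / P x) := by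
  rcases S.eq_empty_or_nonempty with rfl | hS
  · simp
  have hb : 0 < ∑ x ∈ S, P x := Finset.sum_pos hP hS
  have jensen := Real.convexOn_mul_log.map_sum_le (t := S)
      (w := fun x => P x / ∑ y ∈ S, P y) (p := fun x => R x / P x)
      (fun i hi => div_nonneg (hP i hi).le hb.le)
      (by rw [← Finset.sum_div]; field_simp)
      (fun i hi => div_nonneg (hR i hi) (hP i hi).le)
  have e1 : ∑ x ∈ S, (P x / ∑ y ∈ S, P y) • (R x / P x)
      = (∑ x ∈ S, R x) / (∑ y ∈ S, P y) := by
    rw [Finset.sum_div]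
    refine Finset.sum_congr rfl (fun x hx => ?_)
    rw [smul_eq_mul]
    rw [div_mul_div_comm, div_eq_div_iff (mul_pos hb (hP x hx)).ne' hb.ne']
    ring
  have e2 : ∑ x ∈ S, (P x / ∑ y ∈ S, P y) • ((R x / P x) * Real.log (R x / P x))
      = (∑ x ∈ S, R x * Real.log (R x / P x)) / (∑ y ∈ S, P y) := by
    rw [Finset.sum_div]
    refine Finset.sum_congr rfl (fun x hx => ?_)
    rw [smul_eq_mul]
    have ePx : P x * (R x / P x) = R x := by
      field_simp
      rw [mul_comm, mul_div_assoc, div_self (hP x hx).ne', mul_one]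
    rw [show P x / (∑ y ∈ S, P y) * (R x / P x * Real.log (R x / P x))
        = (P x * (R x / P x)) * Real.log (R x / P x) / (∑ y ∈ S, P y) from by ring, ePx]
  rw [e1, e2] at jensen
  have := mul_le_mul_of_nonneg_right jensen hb.le
  rw [div_mul_cancel₀ _ hb.ne'] at this
  calc (∑ x ∈ S, R x) * Real.log ((∑ x ∈ S, R x) / (∑ x ∈ S, P x))
      = (∑ x ∈ S, R x) / (∑ y ∈ S, P y) * Real.log ((∑ x ∈ S, R x) / (∑ y ∈ S, P y))
        * (∑ y ∈ S, P y) := by field_simp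
    _ ≤ _ := this

lemma mul_log_div {u v : ℝ} (hu : 0 ≤ u) (hv : 0 < v) :
    u * Real.log (u/v) = u * (Real.log u - Real.log v) := by
  rcases eq_or_lt_of_le hu with h | h
  · rw [← h]; simp
  · rw [Real.log_div h.ne' hv.ne']

/-- **Lemma 2 (KL Divergence Refined Lower Bound).** -/
theorem kl_divergence_refined_lower_bound
    {𝒳 : Type*} [Fintype 𝒳] [Nonempty 𝒳] (hcard : 2 ≤ Fintype.card 𝒳)
    (P R : 𝒳 → ℝ) (hP : IsPmf P) (hPpos : ∀ x, 0 < P x)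
    (hR : IsPmf R) (hne : R ≠ P) :
    phiFun (balSep P) /
        (4 * Finset.univ.sup' Finset.univ_nonempty (fun x => |(R x - P x) / P x|))
      ≤ klDiv R P / (chiSq R P * ∑ x, |R x - P x|) := by
  obtain ⟨hP0, hP1⟩ := hP
  obtain ⟨hR0, hR1⟩ := hR
  classical
  set A : Finset 𝒳 := Finset.univ.filter (fun x => P x < R x) with hA
  set B : Finset 𝒳 := Finset.univ.filter (fun x => ¬ P x < R x) with hB
  set a : ℝ := ∑ x ∈ A, R x with ha
  set b : ℝ := ∑ x ∈ A, P x with hb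
  have hsplitP : b + ∑ x ∈ B, P x = 1 := by
    rw [hb, hB, hA, Finset.sum_filter_add_sum_filter_not]; exact hP1
  have hsplitR : a + ∑ x ∈ B, R x = 1 := by
    rw [ha, hB, hA, Finset.sum_filter_add_sum_filter_not]; exact hR1
  -- A nonempty
  have hAne : A.Nonempty := by
    rcases A.eq_empty_or_nonempty with h | h
    · exfalso
      have hx : ∀ x, R x ≤ P x := by
        intro x
        by_contra hc
        push_neg at hc
        have : x ∈ A := Finset.mem_filter.2 ⟨Finset.mem_univ x, hc⟩
        rw [h] at this
        exact absurd this (Finset.notMem_empty x)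
      have hsum : ∑ x, (P x - R x) = 0 := by
        rw [Finset.sum_sub_distrib, hP1, hR1]; ring
      have hzero := (Finset.sum_eq_zero_iff_of_nonneg
        (fun x _ => sub_nonneg.2 (hx x))).1 hsum
      exact hne (funext fun x => by
        have := hzero x (Finset.mem_univ x); linarith)
    · exact h
  have hBne : B.Nonempty := by
    rcases B.eq_empty_or_nonempty with h | h
    · exfalso
      have hx : ∀ x, P x < R x := by
        intro x
        by_contra hc
        have : x ∈ B := Finset.mem_filter.2 ⟨Finset.mem_univ x, hc⟩
        rw [h] at this
        exact absurd this (Finset.notMem_empty x)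
      have : (1:ℝ) < 1 := by
        calc (1:ℝ) = ∑ x, P x := hP1.symm
          _ < ∑ x, R x := Finset.sum_lt_sum_of_nonempty Finset.univ_nonempty (fun x _ => hx x)
          _ = 1 := hR1
      linarith
    · exact h
  have hb0 : 0 < b := Finset.sum_pos (fun x _ => hPpos x) hAne
  have hb1 : b < 1 := by
    have : 0 < ∑ x ∈ B, P x := Finset.sum_pos (fun x _ => hPpos x) hBne
    linarith
  have ha0 : 0 ≤ a := Finset.sum_nonneg (fun x _ => hR0 x)
  have ha1 : a ≤ 1 := by
    have : 0 ≤ ∑ x ∈ B, R x := Finset.sum_nonneg (fun x _ => hR0 x)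
    linarith
  -- N and a - b
  set N : ℝ := ∑ x, |R x - P x| with hN
  have haN : N = 2*(a - b) := by
    have hsplit : N = ∑ x ∈ A, |R x - P x| + ∑ x ∈ B, |R x - P x| := by
      rw [hN, hB, hA, Finset.sum_filter_add_sum_filter_not]
    have e1 : ∑ x ∈ A, |R x - P x| = a - b := by
      rw [ha, hb, ← Finset.sum_sub_distrib]
      refine Finset.sum_congr rfl (fun x hx => ?_)
      have := (Finset.mem_filter.1 hx).2
      exact abs_of_pos (by linarith)
    have e2 : ∑ x ∈ B, |R x - P x| = (1-b) - (1-a) := by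
      have : ∑ x ∈ B, |R x - P x| = ∑ x ∈ B, (P x - R x) := by
        refine Finset.sum_congr rfl (fun x hx => ?_)
        have := (Finset.mem_filter.1 hx).2
        push_neg at this
        rw [abs_of_nonpos (by linarith), neg_sub]
      rw [this, Finset.sum_sub_distrib]
      have e3 : ∑ x ∈ B, P x = 1 - b := by linarith
      have e4 : ∑ x ∈ B, R x = 1 - a := by linarith
      rw [e3, e4]
    rw [hsplit, e1, e2]; ring
  -- KL lower bound via binary divergence
  have hkl : a * (Real.log a - Real.log b) + (1-a) * (Real.log (1-a) - Real.log (1-b))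
      ≤ klDiv R P := by
    have hsplit : klDiv R P = ∑ x ∈ A, R x * Real.log (R x / P x)
        + ∑ x ∈ B, R x * Real.log (R x / P x) := by
      rw [klDiv, hB, hA, Finset.sum_filter_add_sum_filter_not]
    have h1 := log_sum A R P (fun x _ => hPpos x) (fun x _ => hR0 x)
    have h2 := log_sum B R P (fun x _ => hPpos x) (fun x _ => hR0 x)
    have e3 : ∑ x ∈ B, P x = 1 - b := by linarith
    have e4 : ∑ x ∈ B, R x = 1 - a := by linarith
    rw [e3, e4] at h2
    rw [← ha, ← hb] at h1
    rw [mul_log_div ha0 hb0] at h1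
    rw [mul_log_div (by linarith) (by linarith)] at h2
    rw [hsplit]
    linarith
  have hbin := binary_bound hb0 hb1 ha0 ha1
  -- balSep facts
  have hmin_le : min b (1-b) ≤ balSep P := by
    have : A ∈ (Finset.univ : Finset 𝒳).powerset :=
      Finset.mem_powerset.2 (Finset.subset_univ A)
    exact Finset.le_sup' (fun A => min (∑ x ∈ A, P x) (1 - ∑ x ∈ A, P x)) this
  have hbal_le : balSep P ≤ 1/2 := by
    refine Finset.sup'_le _ _ (fun C _ => ?_)
    have h1 := min_le_left (∑ x ∈ C, P x) (1 - ∑ x ∈ C, P x)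
    have h2 := min_le_right (∑ x ∈ C, P x) (1 - ∑ x ∈ C, P x)
    linarith
  have hmin_pos : 0 < min b (1-b) := lt_min hb0 (by linarith)
  have hbal_pos : 0 < balSep P := lt_of_lt_of_le hmin_pos hmin_le
  have hphi : phiFun (balSep P) ≤ phiFun (min b (1-b)) :=
    phiFun_anti hmin_pos hmin_le hbal_le
  have hphi_pos : 0 < phiFun (balSep P) := by
    have := two_le_phiFun hbal_pos hbal_le
    linarith
  -- main: phi * N^2 ≤ 4 * klDiv
  have hmain : phiFun (balSep P) * N^2 ≤ 4 * klDiv R P := by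
    have h1 : phiFun (balSep P) * (a-b)^2 ≤ klDiv R P := by
      calc phiFun (balSep P) * (a-b)^2 ≤ phiFun (min b (1-b)) * (a-b)^2 :=
            mul_le_mul_of_nonneg_right hphi (sq_nonneg _)
        _ ≤ _ := le_trans hbin hkl
    have e : N^2 = 4*(a-b)^2 := by rw [haN]; ring
    rw [e]
    linarith [h1]
  -- sup facts
  set M : ℝ := Finset.univ.sup' Finset.univ_nonempty (fun x => |(R x - P x) / P x|) with hM
  obtain ⟨x0, hx0⟩ : ∃ x, R x ≠ P x := by
    by_contra hc
    push_neg at hc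
    exact hne (funext hc)
  have hM0 : 0 < M := by
    have h1 : 0 < |(R x0 - P x0) / P x0| := by
      apply abs_pos.2
      exact div_ne_zero (sub_ne_zero.2 hx0) (hPpos x0).ne'
    rw [hM]
    exact lt_of_lt_of_le h1
      (Finset.le_sup' (fun x => |(R x - P x) / P x|) (Finset.mem_univ x0))
  have hN0 : 0 < N := by
    rw [haN]
    have : b < a := by
      rw [ha, hb]
      exact Finset.sum_lt_sum_of_nonempty hAne
        (fun x hx => (Finset.mem_filter.1 hx).2)
    linarith
  have hχ0 : 0 < chiSq R P := by
    rw [chiSq]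
    refine Finset.sum_pos' (fun x _ => div_nonneg (sq_nonneg _) (hPpos x).le) ⟨x0, Finset.mem_univ x0, ?_⟩
    exact div_pos (sq_pos_of_ne_zero (sub_ne_zero.2 hx0)) (hPpos x0)
  have hχN : chiSq R P ≤ M * N := by
    rw [chiSq]
    calc ∑ x, (R x - P x)^2 / P x = ∑ x, |R x - P x| * |(R x - P x) / P x| := by
          refine Finset.sum_congr rfl (fun x _ => ?_)
          rw [abs_div, abs_of_pos (hPpos x), ← mul_div_assoc, abs_mul_abs_self]
          ring
      _ ≤ ∑ x, |R x - P x| * M := by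
          refine Finset.sum_le_sum (fun x _ => ?_)
          refine mul_le_mul_of_nonneg_left ?_ (abs_nonneg _)
          rw [hM]
          exact Finset.le_sup' (fun x => |(R x - P x) / P x|) (Finset.mem_univ x)
      _ = N * M := by rw [← Finset.sum_mul]
      _ = M * N := mul_comm _ _
  -- conclude
  rw [div_le_div_iff₀ (by positivity) (mul_pos hχ0 hN0)]
  nlinarith [mul_le_mul_of_nonneg_right (mul_le_mul_of_nonneg_left hχN hphi_pos.le) hN0.le,
    mul_le_mul_of_nonneg_left hmain hM0.le]
end

section
/- (Generalized Pinsker's inequality for f-divergences.) Let f:(0,∞)→ℝ be a convex function with f(1)=0 that is strictly convex at 1, thrice differentiable at 1 with f''(1)>0, and satisfies (f(t) − f'(1)(t−1))·(1 − (f'''(1)/(3f''(1)))(t−1)) ≥ (f''(1)/2)(t−1)² for every t∈(0,∞). Then for all pmfs R, P on 𝒳, D_f(R||P) ≥ (f''(1)/2) · ‖R−P‖₁², where ‖R−P‖₁ = Σ_x |R(x)−P(x)|. -/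
open Filter Topology

/-- `f` is strictly convex at `1`. -/
def StrictlyConvexAtOne (f : ℝ → ℝ) : Prop :=
  ∀ x y : ℝ, 0 < x → 0 < y → x ≠ y → ∀ l : ℝ, 0 < l → l < 1 →
    l * x + (1 - l) * y = 1 → f 1 < l * f x + (1 - l) * f y

/-- `f(0) := lim_{t→0⁺} f(t)`, as an extended real (the limit exists for convex `f`;
we use a `limsup` to name it). -/
noncomputable def fZero (f : ℝ → ℝ) : EReal :=
  Filter.limsup (fun t : ℝ => ((f t : ℝ) : EReal)) (nhdsWithin 0 (Set.Ioi (0 : ℝ)))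

/-- `lim_{p→0⁺} p f(1/p)`, as an extended real (the limit exists for convex `f`;
we use a `limsup` to name it). This is the constant in the convention
`0 · f(r/0) = r · lim_{p→0⁺} p f(1/p)`. -/
noncomputable def fInftySlope (f : ℝ → ℝ) : EReal :=
  Filter.limsup (fun p : ℝ => ((p * f (1 / p) : ℝ) : EReal))
    (nhdsWithin 0 (Set.Ioi (0 : ℝ)))

/-- Extended-real-valued f-divergence
`D_f(R‖P) = ∑ₓ P(x) f(R(x)/P(x))`, with the conventions `f(0) = lim_{t→0⁺} f(t)`,
`0·f(0/0) = 0`, and `0·f(r/0) = r·lim_{p→0⁺} p f(1/p)`. -/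
noncomputable def fDivE {𝒳 : Type*} [Fintype 𝒳] (f : ℝ → ℝ) (R P : 𝒳 → ℝ) : EReal :=
  ∑ x, if P x = 0 then ((R x : ℝ) : EReal) * fInftySlope f
       else if R x = 0 then ((P x : ℝ) : EReal) * fZero f
       else ((P x * f (R x / P x) : ℝ) : EReal)



lemma myCoeSum {ι : Type*} (s : Finset ι) (f : ι → ℝ) :
    ((∑ i ∈ s, f i : ℝ) : EReal) = ∑ i ∈ s, ((f i : ℝ) : EReal) :=
  map_sum (⟨⟨Real.toEReal, EReal.coe_zero⟩, EReal.coe_add⟩ : ℝ →+ EReal) f s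

lemma mySumNeBot {ι : Type*} (s : Finset ι) (f : ι → EReal) (h : ∀ i ∈ s, f i ≠ ⊥) :
    ∑ i ∈ s, f i ≠ ⊥ := by
  classical
  induction s using Finset.induction_on with
  | empty => simp
  | @insert a s' hx ih =>
    rw [Finset.sum_insert hx]
    intro hbot
    rcases EReal.add_eq_bot_iff.1 hbot with h1 | h1
    · exact h a (Finset.mem_insert_self _ _) h1
    · exact ih (fun i hi => h i (Finset.mem_insert_of_mem hi)) h1

lemma myNeBotOfCoeLe {r : ℝ} {x : EReal} (h : (r : EReal) ≤ x) : x ≠ ⊥ := by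
  intro hb; rw [hb, le_bot_iff] at h; exact EReal.coe_ne_bot r h

lemma myCoeTendstoTop {α : Type*} {l : Filter α} {φ : α → ℝ} (h : Tendsto φ l atTop) :
    Tendsto (fun p => ((φ p : ℝ) : EReal)) l (𝓝 ⊤) := by
  rw [EReal.tendsto_nhds_top_iff_real]
  intro x
  filter_upwards [h.eventually_gt_atTop x] with a ha
  exact_mod_cast ha

/-- generic: if `φ ≤ h` eventually on `𝓝[>]0` and `φ → ℓ` (EReal), then `ℓ ≤ limsup coe∘h`. -/
lemma myLimsupGe {φ h : ℝ → ℝ} {ℓ : EReal}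
    (hev : ∀ᶠ p in 𝓝[>] (0:ℝ), φ p ≤ h p)
    (hφ : Tendsto (fun p => ((φ p : ℝ) : EReal)) (𝓝[>] (0:ℝ)) (𝓝 ℓ)) :
    ℓ ≤ Filter.limsup (fun p : ℝ => ((h p : ℝ) : EReal)) (𝓝[>] (0:ℝ)) := by
  have h1 : ℓ = Filter.liminf (fun p : ℝ => ((φ p : ℝ) : EReal)) (𝓝[>] (0:ℝ)) :=
    (hφ.liminf_eq).symm
  rw [h1]
  refine le_trans (Filter.liminf_le_limsup) (Filter.limsup_le_limsup ?_)
  filter_upwards [hev] with p hp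
  exact_mod_cast hp

section bounds2
variable (f : ℝ → ℝ) (a b c : ℝ)

lemma slope_top (hc : 0 < c)
    (hcond : ∀ t : ℝ, 0 < t → c*(t-1)^2 ≤ (f t - a*(t-1))*(1 - b*(t-1)))
    (hb : b = 0) : fInftySlope f = ⊤ := by
  subst hb
  have key : ∀ p ∈ Set.Ioo (0:ℝ) 1, c*(1-p)^2 * p⁻¹ - |a| ≤ p * f (1/p) := by
    intro p hp
    obtain ⟨hp0, hp1⟩ := hp
    have ht : (0:ℝ) < 1/p := by positivity
    have h := hcond (1/p) ht
    simp only [mul_zero, zero_mul, sub_zero, mul_one] at h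
    have e1 : p * (c * (1/p - 1)^2) = c*(1-p)^2 * p⁻¹ := by
      field_simp
    have e2 : p * f (1/p) = p * (f (1/p) - a*(1/p - 1)) + a*(1 - p) := by
      field_simp; ring
    have h3 : p * (c * (1/p - 1)^2) ≤ p * (f (1/p) - a*(1/p - 1)) :=
      mul_le_mul_of_nonneg_left h hp0.le
    have h4 : -|a| ≤ a*(1-p) := by
      have : |a*(1-p)| ≤ |a| := by
        rw [abs_mul]
        have : |1 - p| ≤ 1 := by rw [abs_le]; constructor <;> nlinarith
        nlinarith [abs_nonneg a]
      linarith [neg_abs_le (a*(1-p))]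
    rw [e1] at h3
    linarith
  have htd : Tendsto (fun p : ℝ => c*(1-p)^2 * p⁻¹ - |a|) (𝓝[>] (0:ℝ)) atTop := by
    apply tendsto_atTop_add_const_right
    apply Filter.Tendsto.pos_mul_atTop hc
    · have : Tendsto (fun p : ℝ => c*(1-p)^2) (𝓝 (0:ℝ)) (𝓝 (c*(1-0)^2)) :=
        ((continuous_const.mul ((continuous_const.sub continuous_id).pow 2)).tendsto 0)
      simpa using this.mono_left nhdsWithin_le_nhds
    · exact tendsto_inv_nhdsGT_zero
  have := myLimsupGe (φ := fun p => c*(1-p)^2 * p⁻¹ - |a|) (h := fun p => p * f (1/p))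
    (ℓ := ⊤) ?_ (myCoeTendstoTop htd)
  · exact top_le_iff.1 this
  · filter_upwards [Ioo_mem_nhdsGT_of_mem (Set.mem_Ico.2 ⟨le_refl (0:ℝ), one_pos⟩)] with p hp
    exact key p hp

lemma slope_ge (hc : 0 < c)
    (hg : ∀ t : ℝ, 0 < t → 0 ≤ f t - a*(t-1))
    (hcond : ∀ t : ℝ, 0 < t → c*(t-1)^2 ≤ (f t - a*(t-1))*(1 - b*(t-1)))
    (hb : b < 0) : ((a + c/(-b) : ℝ) : EReal) ≤ fInftySlope f := by
  set φ : ℝ → ℝ := fun p => c*(1-p)^2/(p - b*(1-p)) + a*(1-p) with hφdef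
  have key : ∀ p ∈ Set.Ioo (0:ℝ) 1, φ p ≤ p * f (1/p) := by
    intro p hp
    obtain ⟨hp0, hp1⟩ := hp
    have ht : (0:ℝ) < 1/p := by positivity
    have hD : 0 < p - b*(1-p) := by nlinarith
    have h := hcond (1/p) ht
    set g := f (1/p) - a*(1/p - 1) with hgdef
    have hgnn : 0 ≤ g := hg (1/p) ht
    -- multiply h by p^2
    have e2 : p * (1 - b*(1/p - 1)) = p - b*(1-p) := by field_simp; try ring
    have h2 : c*(1-p)^2 ≤ (p * g) * (p - b*(1-p)) := by
      calc c*(1-p)^2 = p^2 * (c*(1/p-1)^2) := by field_simp; try ring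
        _ ≤ p^2 * (g*(1 - b*(1/p - 1))) := mul_le_mul_of_nonneg_left h (sq_nonneg p)
        _ = (p*g)*(p*(1 - b*(1/p - 1))) := by ring
        _ = (p*g)*(p - b*(1-p)) := by rw [e2]
    have h3 : c*(1-p)^2/(p - b*(1-p)) ≤ p * g := (div_le_iff₀ hD).2 h2
    have e3 : p * f (1/p) = p * g + a*(1-p) := by rw [hgdef]; field_simp; ring
    rw [e3, hφdef]
    simp only
    linarith
  have htd : Tendsto φ (𝓝[>] (0:ℝ)) (𝓝 (a + c/(-b))) := by
    have hcont : Tendsto φ (𝓝 (0:ℝ)) (𝓝 (c*(1-0)^2/(0 - b*(1-0)) + a*(1-0))) := by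
      apply Filter.Tendsto.add
      · apply Filter.Tendsto.div
        · exact ((continuous_const.mul ((continuous_const.sub continuous_id).pow 2)).tendsto 0)
        · exact ((continuous_id.sub (continuous_const.mul (continuous_const.sub continuous_id))).tendsto 0)
        · simpa using hb.ne
      · exact ((continuous_const.mul (continuous_const.sub continuous_id)).tendsto 0)
    have : c*(1-0:ℝ)^2/(0 - b*(1-0)) + a*(1-0) = a + c/(-b) := by ring_nf
    rw [this] at hcont
    exact hcont.mono_left nhdsWithin_le_nhds
  apply myLimsupGe (φ := φ)
  · filter_upwards [Ioo_mem_nhdsGT_of_mem (Set.mem_Ico.2 ⟨le_refl (0:ℝ), one_pos⟩)] with p hp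
    exact key p hp
  · exact (EReal.tendsto_coe).2 htd

lemma zero_top (hc : 0 < c)
    (hcond : ∀ t : ℝ, 0 < t → c*(t-1)^2 ≤ (f t - a*(t-1))*(1 - b*(t-1)))
    (hb : b = -1) : fZero f = ⊤ := by
  subst hb
  have key : ∀ t ∈ Set.Ioo (0:ℝ) 1, c*(t-1)^2 * t⁻¹ - |a| ≤ f t := by
    intro t ht
    obtain ⟨ht0, ht1⟩ := ht
    have h := hcond t ht0
    have e : (1 : ℝ) - (-1)*(t-1) = t := by ring
    rw [e] at h
    have hgt : c*(t-1)^2 * t⁻¹ ≤ f t - a*(t-1) := by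
      rw [← div_eq_mul_inv, div_le_iff₀ ht0]
      linarith [h]
    have h4 : -|a| ≤ a*(t-1) := by
      have : |a*(t-1)| ≤ |a| := by
        rw [abs_mul]
        have : |t - 1| ≤ 1 := by rw [abs_le]; constructor <;> nlinarith
        nlinarith [abs_nonneg a]
      linarith [neg_abs_le (a*(t-1))]
    linarith
  have htd : Tendsto (fun t : ℝ => c*(t-1)^2 * t⁻¹ - |a|) (𝓝[>] (0:ℝ)) atTop := by
    apply tendsto_atTop_add_const_right
    apply Filter.Tendsto.pos_mul_atTop hc
    · have : Tendsto (fun t : ℝ => c*(t-1)^2) (𝓝 (0:ℝ)) (𝓝 (c*(0-1)^2)) :=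
        ((continuous_const.mul ((continuous_id.sub continuous_const).pow 2)).tendsto 0)
      have e : c*((0:ℝ)-1)^2 = c := by ring
      rw [e] at this
      exact this.mono_left nhdsWithin_le_nhds
    · exact tendsto_inv_nhdsGT_zero
  have := myLimsupGe (φ := fun t => c*(t-1)^2 * t⁻¹ - |a|) (h := f)
    (ℓ := ⊤) ?_ (myCoeTendstoTop htd)
  · exact top_le_iff.1 this
  · filter_upwards [Ioo_mem_nhdsGT_of_mem (Set.mem_Ico.2 ⟨le_refl (0:ℝ), one_pos⟩)] with t ht
    exact key t ht

lemma zero_ge (hc : 0 < c)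
    (hcond : ∀ t : ℝ, 0 < t → c*(t-1)^2 ≤ (f t - a*(t-1))*(1 - b*(t-1)))
    (hble : b ≤ 0) (hb : -1 < b) : ((c/(1+b) - a : ℝ) : EReal) ≤ fZero f := by
  set φ : ℝ → ℝ := fun t => c*(t-1)^2/(1 - b*(t-1)) + a*(t-1) with hφdef
  have key : ∀ t ∈ Set.Ioo (0:ℝ) 1, φ t ≤ f t := by
    intro t ht
    obtain ⟨ht0, ht1⟩ := ht
    have hD : 0 < 1 - b*(t-1) := by nlinarith
    have h := hcond t ht0
    have h3 : c*(t-1)^2/(1 - b*(t-1)) ≤ f t - a*(t-1) := (div_le_iff₀ hD).2 h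
    rw [hφdef]
    simp only
    linarith
  have htd : Tendsto φ (𝓝[>] (0:ℝ)) (𝓝 (c/(1+b) - a)) := by
    have hcont : Tendsto φ (𝓝 (0:ℝ)) (𝓝 (c*((0:ℝ)-1)^2/(1 - b*((0:ℝ)-1)) + a*((0:ℝ)-1))) := by
      apply Filter.Tendsto.add
      · apply Filter.Tendsto.div
        · exact ((continuous_const.mul ((continuous_id.sub continuous_const).pow 2)).tendsto 0)
        · exact ((continuous_const.sub (continuous_const.mul (continuous_id.sub continuous_const))).tendsto 0)
        · intro hz
          have : b = -1 := by nlinarith [hz]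
          exact absurd this (by linarith)
      · exact ((continuous_const.mul (continuous_id.sub continuous_const)).tendsto 0)
    have e : c*((0:ℝ)-1)^2/(1 - b*((0:ℝ)-1)) + a*((0:ℝ)-1) = c/(1+b) - a := by
      have : (1:ℝ) - b*((0:ℝ)-1) = 1 + b := by ring
      rw [this]; ring_nf
    rw [e] at hcont
    exact hcont.mono_left nhdsWithin_le_nhds
  apply myLimsupGe (φ := φ)
  · filter_upwards [Ioo_mem_nhdsGT_of_mem (Set.mem_Ico.2 ⟨le_refl (0:ℝ), one_pos⟩)] with t ht
    exact key t ht
  · exact (EReal.tendsto_coe).2 htd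


end bounds2

lemma support_line (f : ℝ → ℝ) (hconv : ConvexOn ℝ (Set.Ioi (0:ℝ)) f)
    (hd1 : DifferentiableAt ℝ f 1) (hf1 : f 1 = 0) :
    ∀ t : ℝ, 0 < t → 0 ≤ f t - deriv f 1 * (t - 1) := by
  intro t ht
  rcases lt_trichotomy t 1 with h | h | h
  · have hs := hconv.slope_le_deriv (Set.mem_Ioi.2 ht) (Set.mem_Ioi.2 one_pos) h hd1
    rw [slope_def_field] at hs
    rw [hf1] at hs
    have h1t : 0 < 1 - t := by linarith
    rw [div_le_iff₀ h1t] at hs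
    nlinarith
  · rw [h, hf1]; norm_num
  · have hs := hconv.deriv_le_slope (Set.mem_Ioi.2 one_pos) (Set.mem_Ioi.2 ht) h hd1
    rw [slope_def_field] at hs
    rw [hf1] at hs
    have h1t : 0 < t - 1 := by linarith
    rw [le_div_iff₀ h1t] at hs
    nlinarith

lemma b_le_zero (f : ℝ → ℝ) (a b c : ℝ) (hc : 0 < c)
    (hg : ∀ t : ℝ, 0 < t → 0 ≤ f t - a*(t-1))
    (hcond : ∀ t : ℝ, 0 < t → c*(t-1)^2 ≤ (f t - a*(t-1))*(1 - b*(t-1))) :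
    b ≤ 0 := by
  by_contra hb
  push_neg at hb
  set s : ℝ := 1 + 2/b with hs
  have hspos : 0 < s := by positivity
  have h := hcond s hspos
  have hgs := hg s hspos
  have e1 : s - 1 = 2/b := by rw [hs]; ring
  have e2 : b * (s - 1) = 2 := by rw [e1]; field_simp
  have e3 : (1:ℝ) - b*(s-1) = -1 := by rw [e2]; ring
  rw [e3] at h
  have e4 : (0:ℝ) < (s-1)^2 := by
    have : s - 1 ≠ 0 := by rw [e1]; positivity
    positivity
  nlinarith

lemma b_ge_neg_one (f : ℝ → ℝ) (a b c : ℝ) (hc : 0 < c)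
    (hg : ∀ t : ℝ, 0 < t → 0 ≤ f t - a*(t-1))
    (hcond : ∀ t : ℝ, 0 < t → c*(t-1)^2 ≤ (f t - a*(t-1))*(1 - b*(t-1))) :
    -1 ≤ b := by
  by_contra hb
  push_neg at hb
  have hbneg : b < 0 := by linarith
  have hbne : b ≠ 0 := hbneg.ne
  have h1 : -1 < 1/b := by
    rw [lt_div_iff_of_neg hbneg]
    linarith
  have h2 : 1/b < 0 := by
    exact div_neg_of_pos_of_neg one_pos hbneg
  set s : ℝ := (1 + 1/b)/2 with hs
  have hspos : 0 < s := by rw [hs]; linarith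
  have hslt : s < 1 := by rw [hs]; linarith
  have h := hcond s hspos
  have hgs := hg s hspos
  have e2 : b * (s - 1) = (1 - b)/2 := by rw [hs]; field_simp; ring
  have e3 : (1:ℝ) - b*(s-1) = (1+b)/2 := by rw [e2]; ring
  rw [e3] at h
  have e4 : (0:ℝ) < (s-1)^2 := by
    have : s - 1 ≠ 0 := by intro h0; nlinarith
    positivity
  have e5 : (1+b)/2 < 0 := by linarith
  nlinarith


lemma core_real {𝒳 : Type*} [Fintype 𝒳] (f : ℝ → ℝ) (a b c : ℝ) (hc : 0 < c)
    (hf1 : f 1 = 0)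
    (hg : ∀ t : ℝ, 0 < t → 0 ≤ f t - a*(t-1))
    (hcond : ∀ t : ℝ, 0 < t → c*(t-1)^2 ≤ (f t - a*(t-1))*(1 - b*(t-1)))
    (hble : b ≤ 0) (hbge : -1 ≤ b)
    (R P : 𝒳 → ℝ) (hR : IsPmf R) (hP : IsPmf P)
    (hb0 : b = 0 → ∀ x, P x = 0 → R x = 0)
    (hbm1 : b = -1 → ∀ x, R x = 0 → P x = 0) :
    c * (∑ x, |R x - P x|)^2 ≤
      ∑ x, (if P x = 0 then R x * (if b = 0 then 0 else a + c/(-b))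
            else if R x = 0 then P x * (if b = -1 then 0 else c/(1+b) - a)
            else P x * f (R x / P x)) := by
  classical
  obtain ⟨hRnn, hRsum⟩ := hR
  obtain ⟨hPnn, hPsum⟩ := hP
  set t : 𝒳 → ℝ := fun x => R x / P x with htdef
  set G : 𝒳 → ℝ := fun x => f (t x) - a * (t x - 1) with hGdef
  set u : 𝒳 → ℝ := fun x =>
    if P x = 0 then Real.sqrt (R x * (c/(-b)))
    else if R x = 0 then Real.sqrt (P x * (c/(1+b)))
    else Real.sqrt (P x * G x) with hu
  set v : 𝒳 → ℝ := fun x =>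
    if P x = 0 then Real.sqrt (R x * (-b/c))
    else if R x = 0 then Real.sqrt (P x * ((1+b)/c))
    else if R x = P x then 0
    else Real.sqrt (P x * (t x - 1)^2 / G x) with hv
  set T : 𝒳 → ℝ := fun x =>
    (if P x = 0 then R x * (if b = 0 then 0 else a + c/(-b))
     else if R x = 0 then P x * (if b = -1 then 0 else c/(1+b) - a)
     else P x * f (t x)) with hT
  have hbn : 0 ≤ -b := neg_nonneg.2 hble
  have hbp : 0 ≤ 1 + b := by linarith
  have hCpos : ∀ x, P x ≠ 0 → R x ≠ 0 → 0 < t x := by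
    intro x hPx hRx
    have h1 := (hPnn x).lt_of_ne (Ne.symm hPx)
    have h2 := (hRnn x).lt_of_ne (Ne.symm hRx)
    exact div_pos h2 h1
  have hGnn : ∀ x, P x ≠ 0 → R x ≠ 0 → 0 ≤ G x := fun x hPx hRx => hg _ (hCpos x hPx hRx)
  have ht1 : ∀ x, P x ≠ 0 → R x ≠ 0 → R x ≠ P x → t x ≠ 1 := by
    intro x hPx hRx hne he
    apply hne
    have : R x = P x * 1 := by rw [← he, htdef]; field_simp
    simpa using this
  have hGpos : ∀ x, P x ≠ 0 → R x ≠ 0 → R x ≠ P x → 0 < G x := by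
    intro x hPx hRx hne
    rcases (hGnn x hPx hRx).lt_or_eq with h | h
    · exact h
    · exfalso
      have h2 : c*(t x - 1)^2 ≤ G x * (1 - b*(t x - 1)) := hcond _ (hCpos x hPx hRx)
      rw [← h, zero_mul] at h2
      have hne1 := ht1 x hPx hRx hne
      have : 0 < (t x - 1)^2 := by
        have : t x - 1 ≠ 0 := sub_ne_zero.2 hne1
        positivity
      nlinarith
  -- (1)
  have h1 : ∀ x, |R x - P x| ≤ u x * v x := by
    intro x
    by_cases hPx : P x = 0
    · simp only [hu, hv, if_pos hPx]
      by_cases hb : b = 0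
      · have hRx : R x = 0 := hb0 hb x hPx
        simp [hRx, hPx]
      · have hbneg : b < 0 := lt_of_le_of_ne hble hb
        have hA : 0 ≤ R x * (c/(-b)) := mul_nonneg (hRnn x) (div_nonneg hc.le hbn)
        rw [← Real.sqrt_mul hA]
        have e : R x * (c/(-b)) * (R x * (-b/c)) = (R x)^2 := by
          have hbne : -b ≠ 0 := by intro h0; apply hb; linarith
          field_simp
        rw [e, Real.sqrt_sq (hRnn x), hPx, sub_zero, abs_of_nonneg (hRnn x)]
    · by_cases hRx : R x = 0
      · simp only [hu, hv, if_neg hPx, if_pos hRx]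
        by_cases hb : b = -1
        · exact absurd (hbm1 hb x hRx) hPx
        · have hbgt : -1 < b := lt_of_le_of_ne hbge (Ne.symm hb)
          have hA : 0 ≤ P x * (c/(1+b)) := mul_nonneg (hPnn x) (div_nonneg hc.le hbp)
          rw [← Real.sqrt_mul hA]
          have e : P x * (c/(1+b)) * (P x * ((1+b)/c)) = (P x)^2 := by
            have h1b : (1:ℝ) + b ≠ 0 := by intro h0; apply hb; linarith
            field_simp
          rw [e, Real.sqrt_sq (hPnn x), hRx, zero_sub, abs_neg, abs_of_nonneg (hPnn x)]
      · simp only [hu, hv, if_neg hPx, if_neg hRx]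
        by_cases heq : R x = P x
        · simp [heq]
        · rw [if_neg heq]
          have hGp := hGpos x hPx hRx heq
          have hPp : 0 < P x := (hPnn x).lt_of_ne (Ne.symm hPx)
          have hA : 0 ≤ P x * G x := mul_nonneg hPp.le hGp.le
          rw [← Real.sqrt_mul hA]
          have e : P x * G x * (P x * (t x - 1)^2 / G x) = (R x - P x)^2 := by
            rw [htdef]
            field_simp
          rw [e, Real.sqrt_sq_eq_abs]
  -- (2)
  have h2 : ∀ x, T x = u x ^ 2 + a * (R x - P x) := by
    intro x
    by_cases hPx : P x = 0
    · simp only [hT, hu, if_pos hPx]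
      by_cases hb : b = 0
      · have hRx : R x = 0 := hb0 hb x hPx
        simp [hRx, hPx, hb]
      · have hbneg : b < 0 := lt_of_le_of_ne hble hb
        have hA : 0 ≤ R x * (c/(-b)) := mul_nonneg (hRnn x) (div_nonneg hc.le hbn)
        rw [if_neg hb, Real.sq_sqrt hA, hPx]
        ring
    · by_cases hRx : R x = 0
      · simp only [hT, hu, if_neg hPx, if_pos hRx]
        by_cases hb : b = -1
        · exact absurd (hbm1 hb x hRx) hPx
        · have hA : 0 ≤ P x * (c/(1+b)) := mul_nonneg (hPnn x) (div_nonneg hc.le hbp)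
          rw [if_neg hb, Real.sq_sqrt hA, hRx]
          ring
      · have hPp : 0 < P x := (hPnn x).lt_of_ne (Ne.symm hPx)
        have hA : 0 ≤ P x * G x := mul_nonneg hPp.le (hGnn x hPx hRx)
        simp only [hT, hu, if_neg hPx, if_neg hRx]
        rw [Real.sq_sqrt hA, hGdef]
        simp only
        rw [htdef]
        simp only
        field_simp
        ring
  -- (3)
  have h3 : ∀ x, v x ^ 2 ≤ (P x - b * (R x - P x)) / c := by
    intro x
    by_cases hPx : P x = 0
    · have hA : 0 ≤ R x * (-b/c) := mul_nonneg (hRnn x) (div_nonneg hbn hc.le)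
      simp only [hv, if_pos hPx]
      rw [Real.sq_sqrt hA, hPx]
      rw [div_eq_mul_inv, div_eq_mul_inv]
      have : (P x : ℝ) = 0 := hPx
      rw [hPx] at *
      apply le_of_eq
      ring
    · by_cases hRx : R x = 0
      · have hA : 0 ≤ P x * ((1+b)/c) := mul_nonneg (hPnn x) (div_nonneg hbp hc.le)
        simp only [hv, if_neg hPx, if_pos hRx]
        rw [Real.sq_sqrt hA, hRx]
        apply le_of_eq
        field_simp
        ring
      · have hPp : 0 < P x := (hPnn x).lt_of_ne (Ne.symm hPx)
        simp only [hv, if_neg hPx, if_neg hRx]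
        by_cases heq : R x = P x
        · rw [if_pos heq, heq]
          have : (0:ℝ)^2 = 0 := by norm_num
          rw [this]
          apply div_nonneg _ hc.le
          nlinarith [hPp]
        · rw [if_neg heq]
          have hGp := hGpos x hPx hRx heq
          have hA : 0 ≤ P x * (t x - 1)^2 / G x :=
            div_nonneg (mul_nonneg hPp.le (sq_nonneg _)) hGp.le
          rw [Real.sq_sqrt hA]
          have hkey : c * (t x - 1)^2 ≤ G x * (1 - b*(t x - 1)) := hcond _ (hCpos x hPx hRx)
          rw [div_le_div_iff₀ hGp hc]
          have e : P x - b * (R x - P x) = P x * (1 - b * (t x - 1)) := by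
            rw [htdef]
            field_simp
            try ring
          rw [e]
          calc P x * (t x - 1)^2 * c = P x * (c * (t x - 1)^2) := by ring
            _ ≤ P x * (G x * (1 - b*(t x - 1))) := mul_le_mul_of_nonneg_left hkey hPp.le
            _ = P x * (1 - b * (t x - 1)) * G x := by ring
  -- assemble
  have hsum2 : ∑ x, T x = ∑ x, u x ^ 2 := by
    rw [Finset.sum_congr rfl fun x _ => h2 x]
    rw [Finset.sum_add_distrib, ← Finset.mul_sum, Finset.sum_sub_distrib, hRsum, hPsum]
    simp
  have hsum3 : ∑ x, v x ^ 2 ≤ 1 / c := by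
    calc ∑ x, v x ^ 2 ≤ ∑ x, (P x - b * (R x - P x)) / c :=
          Finset.sum_le_sum fun x _ => h3 x
      _ = (∑ x, (P x - b * (R x - P x))) / c := by rw [Finset.sum_div]
      _ = 1 / c := by
          rw [Finset.sum_sub_distrib, ← Finset.mul_sum, Finset.sum_sub_distrib,
            hRsum, hPsum]
          norm_num
  have hVnn : 0 ≤ ∑ x, |R x - P x| := Finset.sum_nonneg fun x _ => abs_nonneg _
  have huv : ∑ x, |R x - P x| ≤ ∑ x, u x * v x := Finset.sum_le_sum fun x _ => h1 x
  have hcs : (∑ x, u x * v x)^2 ≤ (∑ x, u x ^ 2) * (∑ x, v x ^ 2) :=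
    Finset.sum_mul_sq_le_sq_mul_sq _ _ _
  have hu2nn : 0 ≤ ∑ x, u x ^ 2 := Finset.sum_nonneg fun x _ => sq_nonneg _
  have hV2 : (∑ x, |R x - P x|)^2 ≤ (∑ x, u x ^ 2) * (1 / c) := by
    calc (∑ x, |R x - P x|)^2 ≤ (∑ x, u x * v x)^2 := by
          apply pow_le_pow_left₀ hVnn huv
      _ ≤ (∑ x, u x ^ 2) * (∑ x, v x ^ 2) := hcs
      _ ≤ (∑ x, u x ^ 2) * (1 / c) := mul_le_mul_of_nonneg_left hsum3 hu2nn
  calc c * (∑ x, |R x - P x|)^2 ≤ c * ((∑ x, u x ^ 2) * (1/c)) :=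
        mul_le_mul_of_nonneg_left hV2 hc.le
    _ = ∑ x, u x ^ 2 := by field_simp
    _ = ∑ x, T x := hsum2.symm
    _ = _ := rfl

/-- **Lemma 4 (Generalized Pinsker's Inequality for f-Divergences).** -/
theorem generalized_pinsker
    {𝒳 : Type*} [Fintype 𝒳] (hcard : 2 ≤ Fintype.card 𝒳)
    (f : ℝ → ℝ)
    (hconv : ConvexOn ℝ (Set.Ioi (0 : ℝ)) f)
    (hstrict : StrictlyConvexAtOne f)
    (hf1 : f 1 = 0)
    (hd1 : DifferentiableAt ℝ f 1)
    (hd2 : DifferentiableAt ℝ (deriv f) 1)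
    (hd3 : DifferentiableAt ℝ (deriv (deriv f)) 1)
    (hf2pos : 0 < deriv (deriv f) 1)
    (hcond : ∀ t : ℝ, 0 < t →
      deriv (deriv f) 1 / 2 * (t - 1) ^ 2 ≤
        (f t - deriv f 1 * (t - 1)) *
          (1 - deriv (deriv (deriv f)) 1 / (3 * deriv (deriv f) 1) * (t - 1)))
    (R P : 𝒳 → ℝ) (hR : IsPmf R) (hP : IsPmf P) :
    ((deriv (deriv f) 1 / 2 * (∑ x, |R x - P x|) ^ 2 : ℝ) : EReal)
      ≤ fDivE f R P := by
  classical
  set a := deriv f 1 with ha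
  set cc := deriv (deriv f) 1 / 2 with hcc
  set b := deriv (deriv (deriv f)) 1 / (3 * deriv (deriv f) 1) with hb
  have hc : 0 < cc := by rw [hcc]; linarith
  have hgl : ∀ t : ℝ, 0 < t → 0 ≤ f t - a*(t-1) := support_line f hconv hd1 hf1
  have hcond' : ∀ t : ℝ, 0 < t → cc*(t-1)^2 ≤ (f t - a*(t-1))*(1 - b*(t-1)) := by
    intro s hs
    exact hcond s hs
  have hble : b ≤ 0 := b_le_zero f a b cc hc hgl hcond'
  have hbge : -1 ≤ b := b_ge_neg_one f a b cc hc hgl hcond'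
  have hRnn := hR.1
  have hPnn := hP.1
  simp only [fDivE]
  show ((cc * (∑ x, |R x - P x|) ^ 2 : ℝ) : EReal) ≤ _
  by_cases hcase1 : b = 0 ∧ ∃ x, P x = 0 ∧ R x ≠ 0
  · obtain ⟨hb0, x0, hPx0, hRx0⟩ := hcase1
    have hL : fInftySlope f = ⊤ := slope_top f a b cc hc hcond' hb0
    have hRpos : (0:ℝ) < R x0 := (hRnn x0).lt_of_ne (Ne.symm hRx0)
    conv_rhs => rw [← Finset.add_sum_erase _ _ (Finset.mem_univ x0)]
    have hterm : (if P x0 = 0 then ((R x0 : ℝ) : EReal) * fInftySlope f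
        else if R x0 = 0 then ((P x0 : ℝ) : EReal) * fZero f
        else ((P x0 * f (R x0 / P x0) : ℝ) : EReal)) = ⊤ := by
      rw [if_pos hPx0, hL]
      exact EReal.coe_mul_top_of_pos hRpos
    rw [hterm]
    have hrest : (∑ y ∈ Finset.univ.erase x0,
        (if P y = 0 then ((R y : ℝ) : EReal) * fInftySlope f
        else if R y = 0 then ((P y : ℝ) : EReal) * fZero f
        else ((P y * f (R y / P y) : ℝ) : EReal))) ≠ ⊥ := by
      apply mySumNeBot
      intro y _
      by_cases hPy : P y = 0
      · rw [if_pos hPy, hL]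
        rcases (hRnn y).eq_or_lt with h | h
        · rw [← h]
          simp
        · rw [EReal.coe_mul_top_of_pos h]
          exact (by simp : (⊤:EReal) ≠ ⊥)
      · by_cases hRy : R y = 0
        · rw [if_neg hPy, if_pos hRy]
          have hZ : ((cc/(1+b) - a : ℝ) : EReal) ≤ fZero f :=
            zero_ge f a b cc hc hcond' hble (by rw [hb0]; norm_num)
          have hle : ((P y * (cc/(1+b) - a) : ℝ) : EReal) ≤ ((P y : ℝ) : EReal) * fZero f := by
            rw [EReal.coe_mul]
            exact mul_le_mul_of_nonneg_left hZ (EReal.coe_nonneg.2 (hPnn y))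
          exact myNeBotOfCoeLe hle
        · rw [if_neg hPy, if_neg hRy]
          exact EReal.coe_ne_bot _
    rw [EReal.top_add_of_ne_bot hrest]
    exact le_top
  · by_cases hcase2 : b = -1 ∧ ∃ x, R x = 0 ∧ P x ≠ 0
    · obtain ⟨hbm, x0, hRx0, hPx0⟩ := hcase2
      have hZ : fZero f = ⊤ := zero_top f a b cc hc hcond' hbm
      have hPpos : (0:ℝ) < P x0 := (hPnn x0).lt_of_ne (Ne.symm hPx0)
      conv_rhs => rw [← Finset.add_sum_erase _ _ (Finset.mem_univ x0)]
      have hterm : (if P x0 = 0 then ((R x0 : ℝ) : EReal) * fInftySlope f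
          else if R x0 = 0 then ((P x0 : ℝ) : EReal) * fZero f
          else ((P x0 * f (R x0 / P x0) : ℝ) : EReal)) = ⊤ := by
        rw [if_neg hPx0, if_pos hRx0, hZ]
        exact EReal.coe_mul_top_of_pos hPpos
      rw [hterm]
      have hrest : (∑ y ∈ Finset.univ.erase x0,
          (if P y = 0 then ((R y : ℝ) : EReal) * fInftySlope f
          else if R y = 0 then ((P y : ℝ) : EReal) * fZero f
          else ((P y * f (R y / P y) : ℝ) : EReal))) ≠ ⊥ := by
        apply mySumNeBot
        intro y _
        by_cases hPy : P y = 0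
        · rw [if_pos hPy]
          have hLge : ((a + cc/(-b) : ℝ) : EReal) ≤ fInftySlope f :=
            slope_ge f a b cc hc hgl hcond' (by rw [hbm]; norm_num)
          have hle : ((R y * (a + cc/(-b)) : ℝ) : EReal) ≤ ((R y : ℝ) : EReal) * fInftySlope f := by
            rw [EReal.coe_mul]
            exact mul_le_mul_of_nonneg_left hLge (EReal.coe_nonneg.2 (hRnn y))
          exact myNeBotOfCoeLe hle
        · by_cases hRy : R y = 0
          · rw [if_neg hPy, if_pos hRy, hZ]
            have hPypos : (0:ℝ) < P y := (hPnn y).lt_of_ne (Ne.symm hPy)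
            rw [EReal.coe_mul_top_of_pos hPypos]
            exact (by simp : (⊤:EReal) ≠ ⊥)
          · rw [if_neg hPy, if_neg hRy]
            exact EReal.coe_ne_bot _
      rw [EReal.top_add_of_ne_bot hrest]
      exact le_top
    · -- main case
      have hb0' : b = 0 → ∀ x, P x = 0 → R x = 0 := by
        intro hb0 x hPx
        by_contra hRx
        exact hcase1 ⟨hb0, x, hPx, hRx⟩
      have hbm1' : b = -1 → ∀ x, R x = 0 → P x = 0 := by
        intro hbm x hRx
        by_contra hPx
        exact hcase2 ⟨hbm, x, hRx, hPx⟩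
      have hcore := core_real f a b cc hc hf1 hgl hcond' hble hbge R P hR hP hb0' hbm1'
      calc ((cc * (∑ x, |R x - P x|) ^ 2 : ℝ) : EReal)
          ≤ ((∑ x, (if P x = 0 then R x * (if b = 0 then 0 else a + cc/(-b))
              else if R x = 0 then P x * (if b = -1 then 0 else cc/(1+b) - a)
              else P x * f (R x / P x)) : ℝ) : EReal) := EReal.coe_le_coe_iff.2 hcore
        _ = ∑ x, (((if P x = 0 then R x * (if b = 0 then 0 else a + cc/(-b))
              else if R x = 0 then P x * (if b = -1 then 0 else cc/(1+b) - a)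
              else P x * f (R x / P x) : ℝ)) : EReal) := myCoeSum _ _
        _ ≤ _ := by
            apply Finset.sum_le_sum
            intro x _
            by_cases hPx : P x = 0
            · rw [if_pos hPx, if_pos hPx]
              by_cases hbz : b = 0
              · have hRx : R x = 0 := hb0' hbz x hPx
                rw [if_pos hbz, hRx]
                simp
              · have hbneg : b < 0 := lt_of_le_of_ne hble hbz
                rw [if_neg hbz, EReal.coe_mul]
                exact mul_le_mul_of_nonneg_left
                  (slope_ge f a b cc hc hgl hcond' hbneg) (EReal.coe_nonneg.2 (hRnn x))
            · rw [if_neg hPx, if_neg hPx]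
              by_cases hRx : R x = 0
              · rw [if_pos hRx, if_pos hRx]
                by_cases hbm : b = -1
                · exact absurd (hbm1' hbm x hRx) hPx
                · have hbgt : -1 < b := lt_of_le_of_ne hbge (Ne.symm hbm)
                  rw [if_neg hbm, EReal.coe_mul]
                  exact mul_le_mul_of_nonneg_left
                    (zero_ge f a b cc hc hcond' hble hbgt) (EReal.coe_nonneg.2 (hPnn x))
              · rw [if_neg hRx, if_neg hRx]
end

section
/- (f-Divergence lower bound.) Let f:(0,∞)→ℝ be a convex function with f(1)=0 that is strictly convex at 1, thrice differentiable at 1 with f''(1)>0, and satisfies (f(t) − f'(1)(t−1))·(1 − (f'''(1)/(3f''(1)))(t−1)) ≥ (f''(1)/2)(t−1)² for every t∈(0,∞). Let P be a pmf on 𝒳 with P(x)>0 for all x, and let R be a pmf on 𝒳 with R ≠ P, and set J(x)=R(x)−P(x). Then D_f(R||P) ≥ (f''(1)/2) · χ²(R||P) · ‖J‖₁ / ( max_{x∈𝒳} |J(x)/P(x)| ), where ‖J‖₁ = Σ_x |J(x)|. -/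
/-- Cauchy–Schwarz step for the main theorem. -/
lemma aux_CS {ι : Type*} [Fintype ι] (a c : ℝ) (w G lam : ι → ℝ) (ha : 0 ≤ a)
    (hw : ∀ x, 0 ≤ w x) (hG : ∀ x, 0 ≤ G x)
    (hcl : ∀ x, 0 ≤ 1 - c * lam x)
    (hkey : ∀ x, a / 2 * lam x ^ 2 ≤ G x * (1 - c * lam x))
    (hsum1 : ∑ x, w x * (1 - c * lam x) = 1) :
    a / 2 * (∑ x, w x * |lam x|) ^ 2 ≤ ∑ x, w x * G x := by
  set r : ι → ℝ := fun i => Real.sqrt (w i * G i * (w i * (1 - c * lam i))) with hr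
  have h2 : (∑ i, r i) ^ 2 ≤ (∑ i, w i * G i) * (∑ i, w i * (1 - c * lam i)) :=
    Finset.sum_sq_le_sum_mul_sum_of_sq_eq_mul _
      (fun i _ => mul_nonneg (hw i) (hG i))
      (fun i _ => mul_nonneg (hw i) (hcl i))
      (fun i _ => Real.sq_sqrt (mul_nonneg (mul_nonneg (hw i) (hG i)) (mul_nonneg (hw i) (hcl i))))
  rw [hsum1, mul_one] at h2
  have h3 : ∀ i, Real.sqrt (a / 2) * (w i * |lam i|) ≤ r i := by
    intro i
    have h4 : Real.sqrt (a / 2) * (w i * |lam i|) =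
        Real.sqrt (a / 2 * (w i * |lam i|) ^ 2) := by
      rw [Real.sqrt_mul (by linarith), Real.sqrt_sq (mul_nonneg (hw i) (abs_nonneg _))]
    rw [h4, hr]
    apply Real.sqrt_le_sqrt
    have h6 : w i ^ 2 * (a / 2 * lam i ^ 2) ≤ w i ^ 2 * (G i * (1 - c * lam i)) :=
      mul_le_mul_of_nonneg_left (hkey i) (sq_nonneg _)
    calc a / 2 * (w i * |lam i|) ^ 2 = w i ^ 2 * (a / 2 * lam i ^ 2) := by
          rw [mul_pow, sq_abs]; ring
      _ ≤ w i ^ 2 * (G i * (1 - c * lam i)) := h6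
      _ = w i * G i * (w i * (1 - c * lam i)) := by ring
  have h7 : Real.sqrt (a / 2) * ∑ i, w i * |lam i| ≤ ∑ i, r i := by
    rw [Finset.mul_sum]
    exact Finset.sum_le_sum fun i _ => h3 i
  have h8 : (Real.sqrt (a / 2) * ∑ i, w i * |lam i|) ^ 2 ≤ (∑ i, r i) ^ 2 := by
    apply pow_le_pow_left₀ _ h7
    exact mul_nonneg (Real.sqrt_nonneg _)
      (Finset.sum_nonneg fun i _ => mul_nonneg (hw i) (abs_nonneg _))
  calc a / 2 * (∑ i, w i * |lam i|) ^ 2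
      = (Real.sqrt (a / 2) * ∑ i, w i * |lam i|) ^ 2 := by
        rw [mul_pow, Real.sq_sqrt (by linarith)]
    _ ≤ (∑ i, r i) ^ 2 := h8
    _ ≤ ∑ i, w i * G i := h2

/-- Coercion of a finite real sum into `EReal`. -/
lemma aux_coe_sum {ι : Type*} [Fintype ι] (g : ι → ℝ) :
    ((∑ x, g x : ℝ) : EReal) = ∑ x, ((g x : ℝ) : EReal) :=
  map_sum (⟨⟨Real.toEReal, EReal.coe_zero⟩, fun _ _ => EReal.coe_add _ _⟩ : ℝ →+ EReal) g
    Finset.univ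

/-- A finite `EReal` sum with one `⊤` term and no `⊥` term is `⊤`. -/
lemma aux_sum_top {ι : Type*} [Fintype ι] (g : ι → EReal) (x₀ : ι) (h₀ : g x₀ = ⊤)
    (hb : ∀ x, g x ≠ ⊥) : ∑ x, g x = ⊤ := by
  classical
  rw [← Finset.add_sum_erase Finset.univ g (Finset.mem_univ x₀), h₀]
  apply EReal.top_add_of_ne_bot
  apply Finset.sum_induction g (fun z => z ≠ ⊥)
  · intro u v hu hv huv
    rcases EReal.add_eq_bot_iff.mp huv with h | h
    · exact hu h
    · exact hv h
  · simp
  · intro x _; exact hb x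

/-- **Lemma 5 (f-Divergence Lower Bound).**
`D_f(R‖P) ≥ (f''(1)/2) · χ²(R‖P) · ‖J‖₁ / maxₓ |J(x)/P(x)|` where `J = R − P`. -/
theorem f_divergence_lower_bound
    {𝒳 : Type*} [Fintype 𝒳] [Nonempty 𝒳] (hcard : 2 ≤ Fintype.card 𝒳)
    (f : ℝ → ℝ)
    (hconv : ConvexOn ℝ (Set.Ioi (0 : ℝ)) f)
    (hstrict : StrictlyConvexAtOne f)
    (hf1 : f 1 = 0)
    (hd1 : DifferentiableAt ℝ f 1)
    (hd2 : DifferentiableAt ℝ (deriv f) 1)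
    (hd3 : DifferentiableAt ℝ (deriv (deriv f)) 1)
    (hf2pos : 0 < deriv (deriv f) 1)
    (hcond : ∀ t : ℝ, 0 < t →
      deriv (deriv f) 1 / 2 * (t - 1) ^ 2 ≤
        (f t - deriv f 1 * (t - 1)) *
          (1 - deriv (deriv (deriv f)) 1 / (3 * deriv (deriv f) 1) * (t - 1)))
    (P R : 𝒳 → ℝ) (hP : IsPmf P) (hPpos : ∀ x, 0 < P x)
    (hR : IsPmf R) (hne : R ≠ P) :
    ((deriv (deriv f) 1 / 2 * (chiSq R P * ∑ x, |R x - P x|) /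
        (Finset.univ.sup' Finset.univ_nonempty (fun x => |(R x - P x) / P x|)) : ℝ) : EReal)
      ≤ fDivE f R P := by
  obtain ⟨hP0, hP1⟩ := hP
  obtain ⟨hR0, hR1⟩ := hR
  set a := deriv (deriv f) 1 with ha
  set b := deriv f 1 with hb
  set c := deriv (deriv (deriv f)) 1 / (3 * a) with hc
  set lam : 𝒳 → ℝ := fun x => (R x - P x) / P x with hlam
  set M : ℝ := Finset.univ.sup' Finset.univ_nonempty (fun x => |(R x - P x) / P x|) with hM
  set s : ℝ := ∑ x, |R x - P x| with hs
  -- tangent line bound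
  have htan : ∀ t : ℝ, 0 < t → b * (t - 1) ≤ f t := by
    intro t ht
    rcases lt_trichotomy t 1 with h | h | h
    · have hsl := hconv.slope_le_deriv (Set.mem_Ioi.mpr ht) (Set.mem_Ioi.mpr one_pos) h hd1
      rw [slope_def_field, hf1] at hsl
      have h1t : 0 < 1 - t := by linarith
      rw [div_le_iff₀ h1t] at hsl
      rw [← hb] at hsl
      nlinarith
    · simp [h, hf1]
    · have hsl := hconv.deriv_le_slope (Set.mem_Ioi.mpr one_pos) (Set.mem_Ioi.mpr ht) h hd1
      rw [slope_def_field, hf1] at hsl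
      have h1t : 0 < t - 1 := by linarith
      rw [le_div_iff₀ h1t, ← hb] at hsl
      linarith
  -- strict positivity of the factor 1 - c (t-1) away from 1
  have hfac : ∀ t : ℝ, 0 < t → t ≠ 1 → 0 < 1 - c * (t - 1) := by
    intro t ht ht1
    by_contra hle
    push_neg at hle
    have h1 := hcond t ht
    have h2 : (f t - b * (t - 1)) * (1 - c * (t - 1)) ≤ 0 :=
      mul_nonpos_of_nonneg_of_nonpos (by linarith [htan t ht]) hle
    have h3 : 0 < a / 2 * (t - 1) ^ 2 := by
      have : (t - 1) ≠ 0 := sub_ne_zero_of_ne ht1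
      positivity
    linarith
  -- consequently 0 ≤ 1 + c
  have hc1 : 0 ≤ 1 + c := by
    by_contra hlt
    push_neg at hlt
    have hcneg : c < -1 := by linarith
    have ht0 : 0 < (1 + c) / c := by
      apply div_pos_of_neg_of_neg (by linarith) (by linarith)
    have ht1 : (1 + c) / c ≠ 1 := by
      intro h
      rw [div_eq_one_iff_eq (by linarith : c ≠ 0)] at h
      linarith
    have := hfac ((1 + c) / c) ht0 ht1
    have hcz : c ≠ 0 := by linarith
    have : 1 - c * ((1 + c) / c - 1) = 0 := by
      field_simp
      ring
    linarith
  by_cases htop : 1 + c = 0 ∧ ∃ x, R x = 0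
  · -- degenerate case : fZero f = ⊤ and some R x = 0, so fDivE = ⊤
    obtain ⟨hceq, x₀, hx₀⟩ := htop
    have hcm1 : c = -1 := by linarith
    have hfZtop : fZero f = ⊤ := by
      rw [eq_top_iff]
      have hev : ∀ᶠ t in nhdsWithin 0 (Set.Ioi (0 : ℝ)),
          ((a / 2 * (t - 1) ^ 2 * (1 / t) + b * (t - 1) : ℝ) : EReal)
            ≤ ((f t : ℝ) : EReal) := by
        filter_upwards [self_mem_nhdsWithin] with t ht
        have ht : (0 : ℝ) < t := ht
        have h1 := hcond t ht
        rw [hcm1] at h1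
        have h2 : 1 - (-1 : ℝ) * (t - 1) = t := by ring
        rw [h2] at h1
        have h3 : a / 2 * (t - 1) ^ 2 * (1 / t) ≤ f t - b * (t - 1) := by
          rw [mul_one_div, div_le_iff₀ ht]
          linarith
        exact EReal.coe_le_coe_iff.mpr (by linarith)
      have hT : Filter.Tendsto
          (fun t : ℝ => ((a / 2 * (t - 1) ^ 2 * (1 / t) + b * (t - 1) : ℝ) : EReal))
          (nhdsWithin 0 (Set.Ioi (0 : ℝ))) (nhds (⊤ : EReal)) := by
        have hreal : Filter.Tendsto
            (fun t : ℝ => a / 2 * (t - 1) ^ 2 * (1 / t) + b * (t - 1))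
            (nhdsWithin 0 (Set.Ioi (0 : ℝ))) Filter.atTop := by
          apply Filter.Tendsto.atTop_add
          · apply Filter.Tendsto.pos_mul_atTop (half_pos hf2pos)
            · have hcont : Filter.Tendsto (fun t : ℝ => a / 2 * (t - 1) ^ 2)
                  (nhds (0 : ℝ)) (nhds (a / 2 * ((0 : ℝ) - 1) ^ 2)) := by
                apply Filter.Tendsto.mul tendsto_const_nhds
                exact (Filter.tendsto_id.sub tendsto_const_nhds).pow 2
              have : a / 2 * ((0 : ℝ) - 1) ^ 2 = a / 2 := by ring
              rw [this] at hcont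
              exact hcont.mono_left nhdsWithin_le_nhds
            · exact Filter.Tendsto.congr (fun t => (one_div t).symm) tendsto_inv_nhdsGT_zero
          · have : Filter.Tendsto (fun t : ℝ => b * (t - 1)) (nhds (0 : ℝ))
                (nhds (b * ((0 : ℝ) - 1))) :=
              Filter.Tendsto.mul tendsto_const_nhds (Filter.tendsto_id.sub tendsto_const_nhds)
            exact (this.mono_left nhdsWithin_le_nhds)
        exact EReal.tendsto_nhds_top_iff_real.mpr fun x =>
          (hreal.eventually_gt_atTop x).mono fun t ht => EReal.coe_lt_coe_iff.mpr ht
      calc (⊤ : EReal) = Filter.limsup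
            (fun t : ℝ => ((a / 2 * (t - 1) ^ 2 * (1 / t) + b * (t - 1) : ℝ) : EReal))
            (nhdsWithin 0 (Set.Ioi (0 : ℝ))) := (hT.limsup_eq).symm
        _ ≤ fZero f := Filter.limsup_le_limsup hev
    have : fDivE f R P = ⊤ := by
      apply aux_sum_top _ x₀
      · rw [if_neg (hPpos x₀).ne', if_pos hx₀, hfZtop]
        exact EReal.coe_mul_top_of_pos (hPpos x₀)
      · intro x
        rw [if_neg (hPpos x).ne']
        by_cases hx : R x = 0
        · rw [if_pos hx, hfZtop, EReal.coe_mul_top_of_pos (hPpos x)]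
          exact top_ne_bot
        · rw [if_neg hx]
          exact EReal.coe_ne_bot _
    rw [this]
    exact le_top
  · -- main case
    have hcx : ∀ x : 𝒳, R x = 0 → 0 < 1 + c := by
      intro x hx
      rcases hc1.eq_or_lt with h | h
      · exact absurd ⟨h.symm, ⟨x, hx⟩⟩ htop
      · exact h
    set G : 𝒳 → ℝ := fun x =>
      if R x = 0 then a / 2 / (1 + c) else f (R x / P x) - b * (R x / P x - 1) with hG
    set ℓ : 𝒳 → ℝ := fun x => P x * G x + b * (R x - P x) with hℓ
    -- lower bound on fZero when needed
    have hfZ : 0 < 1 + c → ((a / 2 / (1 + c) - b : ℝ) : EReal) ≤ fZero f := by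
      intro hcpos
      set m : ℝ → ℝ := fun t => a / 2 * (t - 1) ^ 2 / (1 - c * (t - 1)) + b * (t - 1) with hm
      have hev : ∀ᶠ t in nhdsWithin 0 (Set.Ioi (0 : ℝ)),
          ((m t : ℝ) : EReal) ≤ ((f t : ℝ) : EReal) := by
        have hlt1 : ∀ᶠ t : ℝ in nhdsWithin 0 (Set.Ioi (0 : ℝ)), t < 1 :=
          Filter.Eventually.filter_mono nhdsWithin_le_nhds (eventually_lt_nhds one_pos)
        filter_upwards [self_mem_nhdsWithin, hlt1] with t ht htlt
        have ht : (0 : ℝ) < t := ht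
        have hfp := hfac t ht (ne_of_lt htlt)
        have h1 := hcond t ht
        have h2 : a / 2 * (t - 1) ^ 2 / (1 - c * (t - 1)) ≤ f t - b * (t - 1) := by
          rw [div_le_iff₀ hfp]
          linarith
        exact EReal.coe_le_coe_iff.mpr (by simp only [hm]; linarith)
      have hT : Filter.Tendsto (fun t : ℝ => ((m t : ℝ) : EReal))
          (nhdsWithin 0 (Set.Ioi (0 : ℝ))) (nhds ((a / 2 / (1 + c) - b : ℝ) : EReal)) := by
        rw [EReal.tendsto_coe]
        have hreal : Filter.Tendsto m (nhds (0 : ℝ))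
            (nhds (a / 2 * ((0:ℝ) - 1) ^ 2 / (1 - c * ((0:ℝ) - 1)) + b * ((0:ℝ) - 1))) := by
          apply Filter.Tendsto.add
          · apply Filter.Tendsto.div
            · exact Filter.Tendsto.mul tendsto_const_nhds
                ((Filter.tendsto_id.sub tendsto_const_nhds).pow 2)
            · exact Filter.Tendsto.sub tendsto_const_nhds
                (Filter.Tendsto.mul tendsto_const_nhds (Filter.tendsto_id.sub tendsto_const_nhds))
            · have : 1 - c * ((0:ℝ) - 1) = 1 + c := by ring
              rw [this]
              exact ne_of_gt hcpos
          · exact Filter.Tendsto.mul tendsto_const_nhds (Filter.tendsto_id.sub tendsto_const_nhds)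
        have heq : a / 2 * ((0:ℝ) - 1) ^ 2 / (1 - c * ((0:ℝ) - 1)) + b * ((0:ℝ) - 1)
            = a / 2 / (1 + c) - b := by
          have h1 : ((0:ℝ) - 1) ^ 2 = 1 := by norm_num
          have h2 : 1 - c * ((0:ℝ) - 1) = 1 + c := by ring
          rw [h1, h2, mul_one]
          ring
        rw [heq] at hreal
        exact hreal.mono_left nhdsWithin_le_nhds
      calc ((a / 2 / (1 + c) - b : ℝ) : EReal)
          = Filter.limsup (fun t : ℝ => ((m t : ℝ) : EReal))
            (nhdsWithin 0 (Set.Ioi (0 : ℝ))) := (hT.limsup_eq).symm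
        _ ≤ fZero f := Filter.limsup_le_limsup hev
    -- basic facts about lam
    have hlam_zero : ∀ x, R x = 0 → lam x = -1 := by
      intro x hx
      simp only [hlam, hx, zero_sub, neg_div, div_self (hPpos x).ne']
    have hlam_pos : ∀ x, R x ≠ 0 → lam x = R x / P x - 1 := by
      intro x hx
      simp only [hlam]
      rw [sub_div, div_self (hPpos x).ne']
    have hPlam : ∀ x, P x * lam x = R x - P x := by
      intro x
      simp only [hlam]
      rw [mul_comm, div_mul_cancel₀ _ (hPpos x).ne']
    -- nonnegativity of G
    have hG0 : ∀ x, 0 ≤ G x := by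
      intro x
      simp only [hG]
      split_ifs with hx
      · have := hcx x hx
        positivity
      · have hRx : 0 < R x := (hR0 x).lt_of_ne (Ne.symm hx)
        have := htan (R x / P x) (div_pos hRx (hPpos x))
        linarith
    -- the key pointwise inequality
    have hkey : ∀ x, a / 2 * lam x ^ 2 ≤ G x * (1 - c * lam x) := by
      intro x
      by_cases hx : R x = 0
      · rw [hlam_zero x hx]
        simp only [hG, if_pos hx]
        have hcpos := hcx x hx
        have : (1 : ℝ) - c * (-1) = 1 + c := by ring
        rw [this, div_mul_cancel₀ _ (ne_of_gt hcpos)]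
        norm_num
      · have hRx : 0 < R x := (hR0 x).lt_of_ne (Ne.symm hx)
        have ht : 0 < R x / P x := div_pos hRx (hPpos x)
        have h1 := hcond (R x / P x) ht
        rw [hlam_pos x hx]
        simp only [hG, if_neg hx]
        exact h1
    -- 1 - c * lam x is nonneg
    have hcl : ∀ x, 0 ≤ 1 - c * lam x := by
      intro x
      rcases eq_or_ne (lam x) 0 with h | h
      · rw [h]; norm_num
      · by_contra hneg
        push_neg at hneg
        have h1 := hkey x
        have h2 : G x * (1 - c * lam x) ≤ 0 :=
          mul_nonpos_of_nonneg_of_nonpos (hG0 x) (le_of_lt hneg)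
        have h3 : 0 < a / 2 * lam x ^ 2 := by positivity
        linarith
    -- sum of weights is 1
    have hsum1 : ∑ x, P x * (1 - c * lam x) = 1 := by
      have : ∀ x, P x * (1 - c * lam x) = P x - c * (R x - P x) := by
        intro x
        calc P x * (1 - c * lam x) = P x - c * (P x * lam x) := by ring
          _ = P x - c * (R x - P x) := by rw [hPlam x]
      rw [Finset.sum_congr rfl fun x _ => this x]
      rw [Finset.sum_sub_distrib, ← Finset.mul_sum, Finset.sum_sub_distrib, hP1, hR1]
      ring
    -- the Cauchy–Schwarz bound
    have hCS : a / 2 * s ^ 2 ≤ ∑ x, P x * G x := by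
      have h0 : ∀ x, P x * |lam x| = |R x - P x| := by
        intro x
        rw [← hPlam x, abs_mul, abs_of_pos (hPpos x)]
      have := aux_CS a c P G lam hf2pos.le (fun x => (hPpos x).le) hG0 hcl hkey hsum1
      rwa [Finset.sum_congr rfl fun x _ => h0 x] at this
    -- chiSq ≤ M * s
    have hchi : chiSq R P ≤ M * s := by
      unfold chiSq
      rw [hs, Finset.mul_sum]
      apply Finset.sum_le_sum
      intro x _
      have h1 : (R x - P x) ^ 2 / P x = |lam x| * |R x - P x| := by
        have h2 : |R x - P x| = P x * |lam x| := by
          rw [← hPlam x, abs_mul, abs_of_pos (hPpos x)]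
        rw [h2, ← hPlam x, div_eq_iff (hPpos x).ne']
        calc (P x * lam x) ^ 2 = (lam x * lam x) * (P x * P x) := by ring
          _ = (|lam x| * |lam x|) * (P x * P x) := by rw [abs_mul_abs_self]
          _ = |lam x| * (P x * |lam x|) * P x := by ring
      rw [h1]
      apply mul_le_mul_of_nonneg_right _ (abs_nonneg _)
      exact Finset.le_sup' (fun x => |(R x - P x) / P x|) (Finset.mem_univ x)
    -- M > 0
    have hMpos : 0 < M := by
      obtain ⟨x₀, hx₀⟩ : ∃ x, R x ≠ P x := by
        by_contra h
        push_neg at h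
        exact hne (funext h)
      have h1 : 0 < |(R x₀ - P x₀) / P x₀| := by
        apply abs_pos.mpr
        exact div_ne_zero (sub_ne_zero_of_ne hx₀) (hPpos x₀).ne'
      exact lt_of_lt_of_le h1 (Finset.le_sup' (fun x => |(R x - P x) / P x|) (Finset.mem_univ x₀))
    have hs0 : 0 ≤ s := Finset.sum_nonneg fun x _ => abs_nonneg _
    have hchi0 : 0 ≤ chiSq R P := Finset.sum_nonneg fun x _ => div_nonneg (sq_nonneg _) (hPpos x).le
    -- the target real bound
    have hreal : a / 2 * (chiSq R P * s) / M ≤ ∑ x, ℓ x := by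
      have h1 : ∑ x, ℓ x = ∑ x, P x * G x := by
        simp only [hℓ]
        rw [Finset.sum_add_distrib, ← Finset.mul_sum, Finset.sum_sub_distrib, hP1, hR1]
        ring
      rw [h1]
      have h2 : a / 2 * (chiSq R P * s) / M ≤ a / 2 * s ^ 2 := by
        rw [div_le_iff₀ hMpos]
        have h3 : chiSq R P * s ≤ M * s * s :=
          mul_le_mul_of_nonneg_right hchi hs0
        nlinarith [hf2pos]
      linarith [hCS]
    -- conclude in EReal
    have hEsum : ((∑ x, ℓ x : ℝ) : EReal) ≤ fDivE f R P := by
      rw [aux_coe_sum]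
      unfold fDivE
      apply Finset.sum_le_sum
      intro x _
      rw [if_neg (hPpos x).ne']
      by_cases hx : R x = 0
      · rw [if_pos hx]
        have h1 : ℓ x = P x * (a / 2 / (1 + c) - b) := by
          have hGx : G x = a / 2 / (1 + c) := by
            simp only [hG]
            rw [if_pos hx]
          have hlx : ℓ x = P x * G x + b * (R x - P x) := rfl
          rw [hlx, hGx, hx]
          ring
        rw [h1, EReal.coe_mul]
        exact mul_le_mul_of_nonneg_left (hfZ (hcx x hx)) (by exact_mod_cast (hPpos x).le)
      · rw [if_neg hx]
        have h1 : ℓ x = P x * f (R x / P x) := by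
          have hGx : G x = f (R x / P x) - b * (R x / P x - 1) := by
            simp only [hG]
            rw [if_neg hx]
          have hlx : ℓ x = P x * G x + b * (R x - P x) := rfl
          have h2 : P x * (R x / P x - 1) = R x - P x := by
            rw [mul_sub, mul_one, mul_div_cancel₀ _ (hPpos x).ne']
          rw [hlx, hGx]
          linear_combination (-b) * h2
        rw [h1]
    calc ((a / 2 * (chiSq R P * s) / M : ℝ) : EReal)
        ≤ ((∑ x, ℓ x : ℝ) : EReal) := EReal.coe_le_coe_iff.mpr hreal
      _ ≤ fDivE f R P := hEsum
end

section
/- (f-Divergence upper bound.) Let f:(0,∞)→ℝ be a convex function with f(1)=0 that is strictly convex at 1 and differentiable at 1, such that f(0)=lim_{t→0⁺}f(t) is finite and the difference quotient g:(0,∞)→ℝ, g(x)=(f(x)−f(0))/x, is concave. Then for any two pmfs R, P on 𝒳 with P(x)>0 for all x, D_f(R||P) ≤ (f'(1) + f(0)) · χ²(R||P). -/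
/-- f-divergence `D_f(R‖P) = ∑ₓ P(x) f(R(x)/P(x))` (here `P > 0`, so no conventions
beyond the value `f 0` are needed). -/
noncomputable def fDiv {𝒳 : Type*} [Fintype 𝒳] (f : ℝ → ℝ) (R P : 𝒳 → ℝ) : ℝ :=
  ∑ x, P x * f (R x / P x)

/-- **Lemma 7 (f-Divergence Upper Bound).**
If `f` is convex on `(0,∞)`, strictly convex at `1`, differentiable at `1`, `f(1) = 0`,
`f(0) = lim_{t→0⁺} f(t)` is finite, and the difference quotient `g(x) = (f(x)−f(0))/x`
is concave, then `D_f(R‖P) ≤ (f'(1) + f(0)) χ²(R‖P)`. -/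
theorem f_divergence_upper_bound
    {𝒳 : Type*} [Fintype 𝒳] (hcard : 2 ≤ Fintype.card 𝒳)
    (f : ℝ → ℝ)
    (hconv : ConvexOn ℝ (Set.Ioi (0 : ℝ)) f)
    (hstrict : StrictlyConvexAtOne f)
    (hf1 : f 1 = 0)
    (hdiff : DifferentiableAt ℝ f 1)
    (hf0 : Filter.Tendsto f (nhdsWithin 0 (Set.Ioi (0 : ℝ))) (nhds (f 0)))
    (hconc : ConcaveOn ℝ (Set.Ioi (0 : ℝ)) (fun x => (f x - f 0) / x))
    (R P : 𝒳 → ℝ) (hR : IsPmf R) (hP : IsPmf P) (hPpos : ∀ x, 0 < P x) :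
    fDiv f R P ≤ (deriv f 1 + f 0) * chiSq R P := by
  set c : ℝ := deriv f 1 + f 0 with hc
  set g : ℝ → ℝ := fun x => (f x - f 0) / x with hg
  -- g has derivative c at 1
  have hgd : HasDerivAt g c 1 := by
    have h1 : HasDerivAt (fun x : ℝ => f x - f 0) (deriv f 1) 1 :=
      (hdiff.hasDerivAt).sub_const (f 0)
    have h2 : HasDerivAt (fun x : ℝ => x) 1 1 := hasDerivAt_id 1
    have := h1.div h2 one_ne_zero
    refine this.congr_deriv ?_
    simp [hf1, hc]
  have hg1 : g 1 = -f 0 := by simp [hg, hf1]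
  -- support line for concave g at 1
  have hline : ∀ t : ℝ, 0 < t → g t ≤ g 1 + c * (t - 1) := by
    intro t ht
    rcases lt_trichotomy t 1 with h | h | h
    · have := hconc.le_slope_of_hasDerivAt (Set.mem_Ioi.2 ht) (Set.mem_Ioi.2 one_pos) h hgd
      rw [slope_def_field] at this
      have h1t : (0:ℝ) < 1 - t := by linarith
      have h2 : c * (1 - t) ≤ g 1 - g t := (le_div_iff₀ h1t).mp this
      linarith
    · simp [h]
    · have := hconc.slope_le_of_hasDerivAt (Set.mem_Ioi.2 one_pos) (Set.mem_Ioi.2 (by linarith : (0:ℝ) < t)) h hgd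
      rw [slope_def_field] at this
      have ht1 : (0:ℝ) < t - 1 := by linarith
      rw [div_le_iff₀ ht1] at this
      linarith
  -- pointwise bound on f for t ≥ 0
  have hpt : ∀ t : ℝ, 0 ≤ t → f t ≤ f 0 * (1 - t) + c * (t * (t - 1)) := by
    intro t ht
    rcases eq_or_lt_of_le ht with h | h
    · simp [← h]
    · have hgt := hline t h
      have hft : f t = f 0 + t * g t := by
        simp only [hg]
        field_simp [h.ne']
        ring
      rw [hft]
      have := mul_le_mul_of_nonneg_left hgt h.le
      calc f 0 + t * g t ≤ f 0 + t * (g 1 + c * (t - 1)) := by linarith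
        _ = f 0 * (1 - t) + c * (t * (t - 1)) := by rw [hg1]; ring
  -- per-term bound
  have hterm : ∀ x, P x * f (R x / P x) ≤ f 0 * (P x - R x) + c * ((R x) ^ 2 / P x - R x) := by
    intro x
    have hPx := hPpos x
    have hRx := hR.1 x
    have := hpt (R x / P x) (div_nonneg hRx hPx.le)
    have h2 := mul_le_mul_of_nonneg_left this hPx.le
    calc P x * f (R x / P x) ≤ P x * (f 0 * (1 - R x / P x) + c * (R x / P x * (R x / P x - 1))) := h2
      _ = f 0 * (P x - R x) + c * ((R x) ^ 2 / P x - R x) := by field_simp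
  -- sum up
  have hsum : fDiv f R P ≤ ∑ x, (f 0 * (P x - R x) + c * ((R x) ^ 2 / P x - R x)) :=
    Finset.sum_le_sum fun x _ => hterm x
  have hrw : ∑ x, (f 0 * (P x - R x) + c * ((R x) ^ 2 / P x - R x))
      = c * (∑ x, (R x) ^ 2 / P x - 1) := by
    rw [Finset.sum_add_distrib, ← Finset.mul_sum, ← Finset.mul_sum,
      Finset.sum_sub_distrib, Finset.sum_sub_distrib, hR.2, hP.2]
    ring
  have hchi : chiSq R P = ∑ x, (R x) ^ 2 / P x - 1 := by
    have : ∀ x, (R x - P x) ^ 2 / P x = (R x) ^ 2 / P x - 2 * R x + P x := by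
      intro x
      have hPx := (hPpos x).ne'
      field_simp
      ring
    rw [chiSq, Finset.sum_congr rfl fun x _ => this x]
    rw [Finset.sum_add_distrib, Finset.sum_sub_distrib, ← Finset.mul_sum, hR.2, hP.2]
    ring
  rw [hchi]
  calc fDiv f R P ≤ c * (∑ x, (R x) ^ 2 / P x - 1) := by rw [← hrw]; exact hsum
    _ = c * (∑ x, (R x) ^ 2 / P x - 1) := rfl
end

section
/- Let P be a pmf on 𝒳 with P(x)>0 for all x, where |𝒳|≥2. Then the supremum over all nonzero vectors J∈ℝ^𝒳 with Σ_x J(x)=0 of the quantity (max_{x∈𝒳} |J(x)/P(x)|) / ‖J‖₁ is attained and equals 1/(2·min_{x∈𝒳} P(x)), where ‖J‖₁ = Σ_x |J(x)|. -/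
/-- The supremum over nonzero `J` with `∑ₓ J(x) = 0` of
`(maxₓ |J(x)/P(x)|) / ‖J‖₁` is attained and equals `1/(2 minₓ P(x))`. -/
theorem max_ratio_attained
    {𝒳 : Type*} [Fintype 𝒳] [Nonempty 𝒳] (hcard : 2 ≤ Fintype.card 𝒳)
    (P : 𝒳 → ℝ) (hP : IsPmf P) (hPpos : ∀ x, 0 < P x) :
    IsGreatest
      {r : ℝ | ∃ J : 𝒳 → ℝ, J ≠ 0 ∧ (∑ x, J x) = 0 ∧
        r = (Finset.univ.sup' Finset.univ_nonempty (fun x => |J x / P x|)) /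
              (∑ x, |J x|)}
      (1 / (2 * Finset.univ.inf' Finset.univ_nonempty P)) := by
  classical
  obtain ⟨x₀, -, hx₀⟩ := Finset.exists_mem_eq_inf' (Finset.univ_nonempty (α := 𝒳)) P
  set m := Finset.univ.inf' Finset.univ_nonempty P with hm
  have hmle : ∀ x, m ≤ P x := fun x => Finset.inf'_le _ (Finset.mem_univ x)
  have hmpos : 0 < m := hx₀ ▸ hPpos x₀
  obtain ⟨y, hy⟩ := Fintype.exists_ne_of_one_lt_card (by omega) x₀
  constructor
  · -- membership
    refine ⟨fun x => (Pi.single x₀ 1 : 𝒳 → ℝ) x - (Pi.single y 1 : 𝒳 → ℝ) x, ?_, ?_, ?_⟩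
    · intro h
      have := congrFun h x₀
      simp [Pi.single_apply, hy.symm] at this
    · simp [Finset.sum_sub_distrib, Finset.sum_pi_single']
    · have habs : ∀ x, |(Pi.single x₀ 1 : 𝒳 → ℝ) x - (Pi.single y 1 : 𝒳 → ℝ) x|
          = (Pi.single x₀ 1 : 𝒳 → ℝ) x + (Pi.single y 1 : 𝒳 → ℝ) x := by
        intro x
        by_cases h1 : x = x₀
        · subst h1; simp [Pi.single_apply, hy.symm]
        · by_cases h2 : x = y
          · subst h2; simp [Pi.single_apply, h1]
          · simp [Pi.single_apply, h1, h2]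
      have hsum : (∑ x, |(Pi.single x₀ 1 : 𝒳 → ℝ) x - (Pi.single y 1 : 𝒳 → ℝ) x|) = 2 := by
        simp only [habs]
        rw [Finset.sum_add_distrib, Finset.sum_pi_single', Finset.sum_pi_single']
        simp; norm_num
      have hsup : (Finset.univ.sup' Finset.univ_nonempty
          (fun x => |((Pi.single x₀ 1 : 𝒳 → ℝ) x - (Pi.single y 1 : 𝒳 → ℝ) x) / P x|)) = 1 / m := by
        apply le_antisymm
        · apply Finset.sup'_le
          intro x _
          rcases eq_or_ne x x₀ with h1 | h1
          · rw [h1, Pi.single_eq_same, Pi.single_eq_of_ne (Ne.symm hy), sub_zero,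
              abs_div, abs_one, abs_of_pos (hPpos x₀), hx₀]
          · rw [Pi.single_eq_of_ne h1, zero_sub]
            rcases eq_or_ne x y with h2 | h2
            · rw [h2, Pi.single_eq_same, abs_div, abs_neg, abs_one, abs_of_pos (hPpos y)]
              exact one_div_le_one_div_of_le hmpos (hmle y)
            · rw [Pi.single_eq_of_ne h2, neg_zero]
              simp only [zero_div, abs_zero]
              positivity
        · have := Finset.le_sup' (f := fun x => |((Pi.single x₀ 1 : 𝒳 → ℝ) x - (Pi.single y 1 : 𝒳 → ℝ) x) / P x|)
            (Finset.mem_univ x₀)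
          refine le_trans (le_of_eq ?_) this
          rw [Pi.single_eq_same, Pi.single_eq_of_ne (Ne.symm hy), sub_zero,
            abs_div, abs_one, abs_of_pos (hPpos x₀), hx₀]
      rw [hsum, hsup]
      rw [div_div]
      ring_nf
  · -- upper bound
    rintro r ⟨J, hJ, hsum0, rfl⟩
    have hS : 0 < ∑ x, |J x| := by
      have : ∃ x, J x ≠ 0 := by
        by_contra h
        push_neg at h
        exact hJ (funext fun x => h x)
      obtain ⟨x, hx⟩ := this
      have : (0:ℝ) < |J x| := abs_pos.mpr hx
      exact lt_of_lt_of_le this (Finset.single_le_sum (f := fun x => |J x|)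
        (fun i _ => abs_nonneg _) (Finset.mem_univ x))
    have key : ∀ x, |J x / P x| ≤ (∑ z, |J z|) / (2 * m) := by
      intro x
      have h2 : 2 * |J x| ≤ ∑ z, |J z| := by
        have hJx : J x = -∑ z ∈ Finset.univ.erase x, J z := by
          have := Finset.add_sum_erase Finset.univ J (Finset.mem_univ x)
          rw [hsum0] at this
          linarith
        have : |J x| ≤ ∑ z ∈ Finset.univ.erase x, |J z| := by
          rw [hJx, abs_neg]
          exact Finset.abs_sum_le_sum_abs _ _
        have h3 : (∑ z, |J z|) = |J x| + ∑ z ∈ Finset.univ.erase x, |J z| :=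
          (Finset.add_sum_erase Finset.univ (fun z => |J z|) (Finset.mem_univ x)).symm
        linarith
      rw [abs_div, abs_of_pos (hPpos x)]
      rw [div_le_div_iff₀ (hPpos x) (by positivity)]
      have := hmle x
      nlinarith [abs_nonneg (J x)]
    have hsup_le : (Finset.univ.sup' Finset.univ_nonempty (fun x => |J x / P x|))
        ≤ (∑ z, |J z|) / (2 * m) := Finset.sup'_le _ _ (fun x _ => key x)
    calc (Finset.univ.sup' Finset.univ_nonempty (fun x => |J x / P x|)) / (∑ x, |J x|)
        ≤ ((∑ z, |J z|) / (2 * m)) / (∑ x, |J x|) := by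
          gcongr
      _ = 1 / (2 * m) := by
          field_simp
end

section
/- For every t ∈ (0,∞), 2t(t+2)·log(t) − (5t+1)(t−1) ≥ 0. (Equivalently, the function f(t)=t·log(t) satisfies the condition (f(t) − f'(1)(t−1))·(1 − (f'''(1)/(3f''(1)))(t−1)) ≥ (f''(1)/2)(t−1)² for every t∈(0,∞), where f'(1)=1, f''(1)=1, f'''(1)=−1.) -/
private lemma aux_hasDerivAt (t : ℝ) (ht : 0 < t) :
    HasDerivAt (fun x : ℝ => (x - 1) * (x + 5) / (2 * (2 * x + 1)) - Real.log x)
      (4 * (t - 1) ^ 3 / (t * (2 * (2 * t + 1)) ^ 2)) t := by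
  have h1 : HasDerivAt (fun x : ℝ => (x - 1) * (x + 5)) (1 * (t + 5) + (t - 1) * 1) t :=
    (((hasDerivAt_id t).sub_const 1)).mul ((hasDerivAt_id t).add_const 5)
  have h2 : HasDerivAt (fun x : ℝ => 2 * (2 * x + 1)) (2 * (2 * 1)) t :=
    (((hasDerivAt_id t).const_mul 2).add_const 1).const_mul 2
  have hd : (2 * (2 * t + 1)) ≠ 0 := by nlinarith
  have h4 := (h1.div h2 hd).sub (Real.hasDerivAt_log ht.ne')
  refine h4.congr_deriv ?_
  field_simp
  ring

private lemma aux_log_le (t : ℝ) (ht : 0 < t) :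
    Real.log t ≤ (t - 1) * (t + 5) / (2 * (2 * t + 1)) := by
  set f := fun x : ℝ => (x - 1) * (x + 5) / (2 * (2 * x + 1)) - Real.log x with hf
  have hf1 : f 1 = 0 := by simp [hf]
  have key : 0 ≤ f t := by
    rcases le_total 1 t with h | h
    · have hmono : MonotoneOn f (Set.Ici 1) := by
        apply monotoneOn_of_deriv_nonneg (convex_Ici 1)
        · exact fun x hx => (aux_hasDerivAt x (by simp at hx; linarith)).continuousAt.continuousWithinAt
        · intro x hx
          simp only [interior_Ici, Set.mem_Ioi] at hx
          exact (aux_hasDerivAt x (by linarith)).differentiableAt.differentiableWithinAt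
        · intro x hx
          simp only [interior_Ici, Set.mem_Ioi] at hx
          rw [(aux_hasDerivAt x (by linarith)).deriv]
          exact div_nonneg (by nlinarith [sq_nonneg (x - 1)]) (mul_nonneg (by linarith) (by positivity))
      have := hmono (Set.self_mem_Ici) (Set.mem_Ici.mpr h) h
      linarith [this, hf1.symm ▸ this]
    · have hanti : AntitoneOn f (Set.Ioc 0 1) := by
        apply antitoneOn_of_deriv_nonpos (convex_Ioc 0 1)
        · exact fun x hx => (aux_hasDerivAt x hx.1).continuousAt.continuousWithinAt
        · intro x hx
          rw [interior_Ioc] at hx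
          exact (aux_hasDerivAt x hx.1).differentiableAt.differentiableWithinAt
        · intro x hx
          rw [interior_Ioc] at hx
          rw [(aux_hasDerivAt x hx.1).deriv]
          apply div_nonpos_of_nonpos_of_nonneg
          · nlinarith [hx.1, hx.2, sq_nonneg (x - 1)]
          · exact mul_nonneg hx.1.le (by positivity)
      have := hanti (Set.mem_Ioc.mpr ⟨ht, h⟩) (Set.mem_Ioc.mpr ⟨one_pos, le_refl 1⟩) h
      linarith
  have : f t = (t - 1) * (t + 5) / (2 * (2 * t + 1)) - Real.log t := rfl
  linarith [key, this ▸ key]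

/-- For every `t ∈ (0,∞)`, `2t(t+2) log t − (5t+1)(t−1) ≥ 0`. -/
theorem two_t_log_ineq (t : ℝ) (ht : 0 < t) :
    0 ≤ 2 * t * (t + 2) * Real.log t - (5 * t + 1) * (t - 1) := by
  have h := aux_log_le (1 / t) (by positivity)
  rw [one_div, Real.log_inv] at h
  have heq : (t⁻¹ - 1) * (t⁻¹ + 5) / (2 * (2 * t⁻¹ + 1)) =
      (1 - t) * (1 + 5 * t) / (2 * t * (t + 2)) := by
    field_simp
    ring
  rw [heq] at h
  have hB : 0 < 2 * t * (t + 2) := by nlinarith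
  rw [le_div_iff₀ hB] at h
  nlinarith [h]
end
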